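/- arXiv:2603.06015 — 3 statements merged into one kernel-verified Lean document; each statement's English description precedes it below -/
import Mathlib

section
/- The gap-2 Virasoro algebra 𝔤 (the gap-p Virasoro algebra with p = 2) is isomorphic as a complex Lie algebra to the mirror Heisenberg–Virasoro algebra 𝕄; more precisely, there exists a Lie algebra isomorphism φ : 𝔤 → 𝕄 with φ(L_{2m}) = 2 d_{−m} and φ(I_{2m+1}) = 2 h_{−m−1/2} for all m ∈ ℤ, φ(C_1) = −2 l, and φ(C_0) a scalar multiple of c. -/
open Finsupp TensorProduct

attribute [local instance 100] LieRing.ofAssociativeRing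

/-! ### Abstract presentation of the twisted Heisenberg-Virasoro algebra -/

/-- The twisted Heisenberg-Virasoro algebra: a complex Lie algebra with basis
`{L n, I n, CL, CLI, CI : n ∈ ℤ}` and the prescribed brackets. -/
structure TwistedHV where
  T : Type
  [lieRing : LieRing T]
  [lieAlg : LieAlgebra ℂ T]
  L : ℤ → T
  I : ℤ → T
  CL : T
  CLI : T
  CI : T
  basis : Module.Basis (ℤ ⊕ ℤ ⊕ Fin 3) ℂ T
  basis_eq : ∀ x, basis x = Sum.elim L (Sum.elim I ![CL, CLI, CI]) x
  bracket_LL : ∀ m n : ℤ,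
    ⁅L m, L n⁆ = ((n : ℂ) - (m : ℂ)) • L (m + n) +
      (if m + n = 0 then (((m : ℂ) ^ 3 - (m : ℂ)) / 12) • CL else 0)
  bracket_LI : ∀ m n : ℤ,
    ⁅L m, I n⁆ = (n : ℂ) • I (m + n) +
      (if m + n = 0 then ((m : ℂ) ^ 2 + (m : ℂ)) • CLI else 0)
  bracket_II : ∀ m n : ℤ,
    ⁅I m, I n⁆ = if m + n = 0 then (m : ℂ) • CI else 0
  central_CL : ∀ x : T, ⁅CL, x⁆ = 0
  central_CLI : ∀ x : T, ⁅CLI, x⁆ = 0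
  central_CI : ∀ x : T, ⁅CI, x⁆ = 0

attribute [instance] TwistedHV.lieRing TwistedHV.lieAlg

/-- The gap-`p` Virasoro algebra: `Lg n` represents `L_{p n}`, `Ig m` represents `I_m`
for `m` not divisible by `p`, and `Cg j` represents the central element `C_j` for
`0 ≤ j ≤ ⌊p/2⌋`. -/
structure GapVirasoro (p : ℕ) where
  g : Type
  [lieRing : LieRing g]
  [lieAlg : LieAlgebra ℂ g]
  Lg : ℤ → g
  Ig : ℤ → g
  Cg : ℕ → g
  basis : Module.Basis (ℤ ⊕ {m : ℤ // ¬ ((p : ℤ) ∣ m)} ⊕ {j : ℕ // j ≤ p / 2}) ℂ g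
  basis_eq : ∀ x, basis x = Sum.elim Lg (Sum.elim (fun m => Ig m.1) (fun j => Cg j.1)) x
  bracket_LL : ∀ m n : ℤ,
    ⁅Lg m, Lg n⁆ = ((p : ℂ) * ((n : ℂ) - (m : ℂ))) • Lg (m + n) +
      (if m + n = 0 then (((m : ℂ) ^ 3 - (m : ℂ)) / 12) • Cg 0 else 0)
  bracket_LI : ∀ m b : ℤ, ¬ ((p : ℤ) ∣ b) →
    ⁅Lg m, Ig b⁆ = (b : ℂ) • Ig ((p : ℤ) * m + b)
  bracket_II : ∀ a b : ℤ, ¬ ((p : ℤ) ∣ a) → ¬ ((p : ℤ) ∣ b) →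
    ⁅Ig a, Ig b⁆ =
      if a + b = 0 then (a : ℂ) • Cg (min ((a % (p : ℤ)).toNat) (p - (a % (p : ℤ)).toNat)) else 0
  central_C : ∀ j : ℕ, j ≤ p / 2 → ∀ x : g, ⁅Cg j, x⁆ = 0

attribute [instance] GapVirasoro.lieRing GapVirasoro.lieAlg

/-- The mirror Heisenberg-Virasoro algebra: `h n` represents `h_{n + 1/2}`. -/
structure MirrorHV where
  M : Type
  [lieRing : LieRing M]
  [lieAlg : LieAlgebra ℂ M]
  d : ℤ → M
  h : ℤ → M
  c : M
  l : M
  basis : Module.Basis (ℤ ⊕ ℤ ⊕ Fin 2) ℂ M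
  basis_eq : ∀ x, basis x = Sum.elim d (Sum.elim h ![c, l]) x
  bracket_dd : ∀ m n : ℤ,
    ⁅d m, d n⁆ = ((m : ℂ) - (n : ℂ)) • d (m + n) +
      (if m + n = 0 then (((m : ℂ) ^ 3 - (m : ℂ)) / 12) • c else 0)
  bracket_dh : ∀ m n : ℤ, ⁅d m, h n⁆ = (-((n : ℂ) + 1 / 2)) • h (m + n)
  bracket_hh : ∀ m n : ℤ,
    ⁅h m, h n⁆ = if m + n + 1 = 0 then ((m : ℂ) + 1 / 2) • l else 0
  central_c : ∀ x : M, ⁅c, x⁆ = 0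
  central_l : ∀ x : M, ⁅l, x⁆ = 0

attribute [instance] MirrorHV.lieRing MirrorHV.lieAlg

/-! ### Representations of the subalgebras `𝔗ₙ` -/

/-- A module over the subalgebra `𝔗ₙ = span{L k, I (n+k) : k ∈ ℕ}` of the twisted
Heisenberg-Virasoro algebra, encoded through the action operators (`IV m` is only
meaningful, and only constrained, for `m ≥ n`). -/
structure THVRep (n : ℕ) where
  V : Type
  [addCommGroup : AddCommGroup V]
  [module : Module ℂ V]
  LV : ℕ → Module.End ℂ V
  IV : ℕ → Module.End ℂ V
  comm_LL : ∀ k l : ℕ, ⁅LV k, LV l⁆ = ((l : ℂ) - (k : ℂ)) • LV (k + l)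
  comm_LI : ∀ k l : ℕ, n ≤ l → ⁅LV k, IV l⁆ = (l : ℂ) • IV (k + l)
  comm_II : ∀ k l : ℕ, n ≤ k → n ≤ l → ⁅IV k, IV l⁆ = 0

attribute [instance] THVRep.addCommGroup THVRep.module

namespace THVRep

variable {n : ℕ}

/-- A `𝔗ₙ`-module is restricted if every vector is annihilated by `L m` and `I m`
for all sufficiently large `m`. -/
def Restricted (R : THVRep n) : Prop :=
  ∀ v : R.V, ∃ N : ℕ, ∀ m : ℕ, N ≤ m → R.LV m v = 0 ∧ R.IV m v = 0

/-- `V` has annihilating level `(h, q)` (with `h ≥ n`). -/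
def AnnLevel (R : THVRep n) (h q : ℕ) : Prop :=
  n ≤ h ∧ (∃ v : R.V, R.IV h v ≠ 0) ∧ (∃ v : R.V, R.LV q v ≠ 0) ∧
    (∀ k : ℕ, h < k → ∀ v : R.V, R.IV k v = 0) ∧
    (∀ k : ℕ, q < k → ∀ v : R.V, R.LV k v = 0)

/-- Irreducibility of a `𝔗ₙ`-module. -/
def IsSimple (R : THVRep n) : Prop :=
  (∃ v : R.V, v ≠ 0) ∧
  ∀ W : Submodule ℂ R.V,
    (∀ k : ℕ, ∀ v ∈ W, R.LV k v ∈ W) →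
    (∀ m : ℕ, n ≤ m → ∀ v ∈ W, R.IV m v ∈ W) →
    W = ⊥ ∨ W = ⊤

end THVRep

/-- Isomorphism of `𝔗_r`-modules (both sides regarded as `𝔗_r`-modules by restriction). -/
def RepIso {n₁ n₂ : ℕ} (R : THVRep n₁) (S : THVRep n₂) (r : ℕ) : Prop :=
  ∃ ψ : R.V ≃ₗ[ℂ] S.V,
    (∀ k : ℕ, ∀ v : R.V, ψ (R.LV k v) = S.LV k (ψ v)) ∧
    (∀ m : ℕ, r ≤ m → ∀ v : R.V, ψ (R.IV m v) = S.IV m (ψ v))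

/-- `min {d i : i ∈ P}` (junk value `0` if `P = ∅`). -/
def finsetMin (P : Finset ℕ) (d : ℕ → ℕ) : ℕ :=
  if h : P.Nonempty then P.inf' h d else 0

/-- `min (d 0, …, d (p-1))`. -/
def dmin (p : ℕ) (d : ℕ → ℕ) : ℕ := finsetMin (Finset.range p) d

/-- The set `P - P = {(i - j) mod p : i, j ∈ P}`. -/
def PdiffP (p : ℕ) (P : Finset ℕ) : Finset ℕ :=
  Finset.image₂ (fun i j : ℕ => (((i : ℤ) - (j : ℤ)) % (p : ℤ)).toNat) P P

/-- The index set `𝒫 = {k ∈ ℤ : k mod p ∈ P}`. -/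
def PIdx (p : ℕ) (P : Finset ℕ) : Type :=
  {k : ℤ // ((k % (p : ℤ)).toNat) ∈ P}

lemma mem_shift {P : Finset ℕ} {q r k : ℤ} (h : (((r + k) % q).toNat) ∈ P) (m : ℤ) :
    (((q * m + r + k) % q).toNat) ∈ P := by
  have e : q * m + r + k = r + k + m * q := by ring
  rw [e, Int.add_mul_emod_self_right]
  exact h

lemma mem_shift0 {P : Finset ℕ} {q k : ℤ} (h : ((k % q).toNat) ∈ P) (m : ℤ) :
    (((q * m + k) % q).toNat) ∈ P := by
  have e : q * m + k = k + m * q := by ring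
  rw [e, Int.add_mul_emod_self_right]
  exact h

/-- Shift of an index `k ∈ 𝒫` by `p * m`. -/
def shiftIdx0 {p : ℕ} {P : Finset ℕ} (k : PIdx p P) (m : ℤ) : PIdx p P :=
  ⟨(p : ℤ) * m + k.1, mem_shift0 k.2 m⟩

/-! ### Representations, irreducibility and isomorphism -/

/-- Irreducibility of a representation `ρ` of a complex Lie algebra. -/
def IsIrreducibleRep {g : Type} [LieRing g] [LieAlgebra ℂ g]
    {M : Type} [AddCommGroup M] [Module ℂ M]
    (ρ : g →ₗ⁅ℂ⁆ Module.End ℂ M) : Prop :=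
  (∃ w : M, w ≠ 0) ∧
  ∀ W : Submodule ℂ M, (∀ x : g, ∀ w ∈ W, ρ x w ∈ W) → W = ⊥ ∨ W = ⊤

/-- Isomorphism of two representations of the same complex Lie algebra. -/
def RepModIso {g : Type} [LieRing g] [LieAlgebra ℂ g]
    {M₁ M₂ : Type} [AddCommGroup M₁] [Module ℂ M₁] [AddCommGroup M₂] [Module ℂ M₂]
    (ρ₁ : g →ₗ⁅ℂ⁆ Module.End ℂ M₁) (ρ₂ : g →ₗ⁅ℂ⁆ Module.End ℂ M₂) : Prop :=
  ∃ φ : M₁ ≃ₗ[ℂ] M₂, ∀ (x : g) (w : M₁), φ (ρ₁ x w) = ρ₂ x (φ w)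

/-- The action formulas defining the `𝔗`-module `M(V, a, d)` on `V ⊗ ℂ[x^{±1}] = ℤ →₀ V`. -/
def IsTHVAction (T : TwistedHV) (p : ℕ) (d : ℕ → ℕ) (a : ℂ) {n : ℕ} (R : THVRep n)
    (ρ : T.T →ₗ⁅ℂ⁆ Module.End ℂ (ℤ →₀ R.V)) : Prop :=
  (∀ (m k : ℤ) (v : R.V),
    ρ (T.L m) (Finsupp.single k v) =
      (a + (k : ℂ)) • Finsupp.single (m + k) v +
      ∑ᶠ j : ℕ, (((m : ℂ) ^ (j + 1)) / ((j + 1).factorial : ℂ)) •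
        Finsupp.single (m + k) (R.LV j v)) ∧
  (∀ (b k : ℤ) (v : R.V),
    ρ (T.I b) (Finsupp.single k v) =
      ∑ᶠ j : ℕ, (((b : ℂ) ^ (j + d ((b % (p : ℤ)).toNat))) /
          ((j + d ((b % (p : ℤ)).toNat)).factorial : ℂ)) •
        Finsupp.single (b + k) (R.IV (j + d ((b % (p : ℤ)).toNat)) v)) ∧
  ρ T.CL = 0 ∧ ρ T.CLI = 0 ∧ ρ T.CI = 0

/-- The action formulas defining the `𝔤`-module `M(V, a, d, P)` on `V ⊗ ℂ[P]`. -/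
def IsGapAction {p : ℕ} (G : GapVirasoro p) (P : Finset ℕ) (d : ℕ → ℕ) (a : ℂ)
    {n : ℕ} (R : THVRep n)
    (ρ : G.g →ₗ⁅ℂ⁆ Module.End ℂ (PIdx p P →₀ R.V)) : Prop :=
  (∀ (m : ℤ) (k : PIdx p P) (v : R.V),
    ρ (G.Lg m) (Finsupp.single k v) =
      (a + (k.1 : ℂ)) • Finsupp.single (shiftIdx0 k m) v +
      ∑ᶠ j : ℕ, (((((p : ℤ) * m : ℤ) : ℂ) ^ (j + 1)) / ((j + 1).factorial : ℂ)) •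
        Finsupp.single (shiftIdx0 k m) (R.LV j v)) ∧
  (∀ (m : ℤ) (i : ℕ), 1 ≤ i → i ≤ p - 1 → ∀ (k : PIdx p P) (v : R.V),
    ρ (G.Ig ((p : ℤ) * m + (i : ℤ))) (Finsupp.single k v) =
      if h : ((((i : ℤ) + k.1) % (p : ℤ)).toNat) ∈ P then
        ∑ᶠ j : ℕ, (((((p : ℤ) * m + (i : ℤ) : ℤ) : ℂ) ^ (j + d i)) / ((j + d i).factorial : ℂ)) •
          Finsupp.single (⟨(p : ℤ) * m + (i : ℤ) + k.1, mem_shift h m⟩ : PIdx p P)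
            (R.IV (j + d i) v)
      else 0) ∧
  (∀ j : ℕ, j ≤ p / 2 → ρ (G.Cg j) = 0)

/-- The operator `Ω^{(i,j,s)}_{l,m}` as an element of the universal enveloping algebra. -/
noncomputable def OmegaU (T : TwistedHV) (p : ℕ) (i j : ℕ) (l m : ℤ) (s : ℕ) :
    UniversalEnvelopingAlgebra ℂ T.T :=
  ∑ k ∈ Finset.range (s + 1),
    ((-1 : ℂ) ^ (s - k) * (s.choose k : ℂ)) •
      ((UniversalEnvelopingAlgebra.ι ℂ (T.I ((p : ℤ) * l - (p : ℤ) * m - (p : ℤ) * k + (i : ℤ)))) *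
       (UniversalEnvelopingAlgebra.ι ℂ (T.I ((p : ℤ) * m + (p : ℤ) * k + (j : ℤ)))))

/-- The action of the operator `Ω^{(i,j,s)}_{l,m}` in a representation `ρ`, where `Iop`
is the family of elements `I_n`. -/
noncomputable def OmegaOp {g : Type} [LieRing g] [LieAlgebra ℂ g]
    {M : Type} [AddCommGroup M] [Module ℂ M]
    (ρ : g →ₗ⁅ℂ⁆ Module.End ℂ M) (Iop : ℤ → g) (p : ℕ) (i j : ℕ) (l m : ℤ) (s : ℕ) :
    Module.End ℂ M :=
  ∑ k ∈ Finset.range (s + 1),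
    ((-1 : ℂ) ^ (s - k) * (s.choose k : ℂ)) •
      (ρ (Iop ((p : ℤ) * l - (p : ℤ) * m - (p : ℤ) * k + (i : ℤ))) *
       ρ (Iop ((p : ℤ) * m + (p : ℤ) * k + (j : ℤ))))

/-- The module of intermediate series `A(α, β, γ, Q)` over the gap-2 Virasoro algebra. -/
def IsARep (G : GapVirasoro 2) (α β γ : ℂ) (Q : Finset ℕ)
    (ρ : G.g →ₗ⁅ℂ⁆ Module.End ℂ (PIdx 2 Q →₀ ℂ)) : Prop :=
  (∀ (m : ℤ) (k : PIdx 2 Q),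
    ρ (G.Lg m) (Finsupp.single k (1 : ℂ)) =
      (α + 2 * β * (m : ℂ) + (k.1 : ℂ)) • Finsupp.single (shiftIdx0 k m) (1 : ℂ)) ∧
  (∀ (m : ℤ) (k : PIdx 2 Q),
    ρ (G.Ig (((2 : ℕ) : ℤ) * m + 1) ) (Finsupp.single k (1 : ℂ)) =
      if h : (((1 + k.1) % ((2 : ℕ) : ℤ)).toNat) ∈ Q then
        (if k.1 % 2 = 0 then (1 : ℂ) else γ) •
          Finsupp.single (⟨((2 : ℕ) : ℤ) * m + 1 + k.1, mem_shift h m⟩ : PIdx 2 Q) (1 : ℂ)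
      else 0) ∧
  ρ (G.Cg 0) = 0 ∧ ρ (G.Cg 1) = 0

/-- An irreducible highest weight representation of the gap-2 Virasoro algebra of level
`(c, h, l)`, i.e. a copy of `L(c, h, l)`. -/
def IsHWRep {HW : Type} [AddCommGroup HW] [Module ℂ HW]
    (G : GapVirasoro 2) (c h l : ℂ) (ρ : G.g →ₗ⁅ℂ⁆ Module.End ℂ HW) : Prop :=
  IsIrreducibleRep ρ ∧
  ∃ w₀ : HW, w₀ ≠ 0 ∧ ρ (G.Lg 0) w₀ = h • w₀ ∧
    ρ (G.Cg 0) w₀ = c • w₀ ∧ ρ (G.Cg 1) w₀ = l • w₀ ∧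
    (∀ m : ℕ, 1 ≤ m → ρ (G.Lg (m : ℤ)) w₀ = 0 ∧ ρ (G.Ig (2 * (m : ℤ) - 1)) w₀ = 0)

/-- `ρ₂` is a subquotient of `ρ₁`: there is an invariant submodule `W` and an
equivariant surjection `W → M₂`. -/
def IsSubquotientRep {g : Type} [LieRing g] [LieAlgebra ℂ g]
    {M₁ M₂ : Type} [AddCommGroup M₁] [Module ℂ M₁] [AddCommGroup M₂] [Module ℂ M₂]
    (ρ₁ : g →ₗ⁅ℂ⁆ Module.End ℂ M₁) (ρ₂ : g →ₗ⁅ℂ⁆ Module.End ℂ M₂) : Prop :=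
  ∃ W : Submodule ℂ M₁, ∃ hW : ∀ x : g, ∀ w ∈ W, ρ₁ x w ∈ W,
    ∃ π : W →ₗ[ℂ] M₂, Function.Surjective π ∧
      ∀ (x : g) (w : M₁) (hw : w ∈ W), π ⟨ρ₁ x w, hW x w hw⟩ = ρ₂ x (π ⟨w, hw⟩)


/-- Index-wise forward map for the gap-2/mirror isomorphism. -/
noncomputable def gap2f (M : MirrorHV) :
    (ℤ ⊕ {m : ℤ // ¬ (((2 : ℕ) : ℤ)) ∣ m} ⊕ {j : ℕ // j ≤ 2 / 2}) → M.M
  | Sum.inl m => (2 : ℂ) • M.d (-m)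
  | Sum.inr (Sum.inl b) => (2 : ℂ) • M.h ((-(b.1 + 1)) / 2)
  | Sum.inr (Sum.inr j) => if j.1 = 0 then (-4 : ℂ) • M.c else (-2 : ℂ) • M.l

/-- Index-wise backward map for the gap-2/mirror isomorphism. -/
noncomputable def gap2g (G : GapVirasoro 2) : (ℤ ⊕ ℤ ⊕ Fin 2) → G.g
  | Sum.inl m => (1 / 2 : ℂ) • G.Lg (-m)
  | Sum.inr (Sum.inl n) => (1 / 2 : ℂ) • G.Ig (-2 * n - 1)
  | Sum.inr (Sum.inr j) => if j = 0 then (-1 / 4 : ℂ) • G.Cg 0 else (-1 / 2 : ℂ) • G.Cg 1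

/-- the gap-2 Virasoro algebra is isomorphic to the mirror
Heisenberg-Virasoro algebra via `L_{2m} ↦ 2 d_{-m}`, `I_{2m+1} ↦ 2 h_{-m-1/2}`,
`C_1 ↦ -2 l`, and `C_0` mapping to a scalar multiple of `c`. -/
theorem gap2_iso_mirror (G : GapVirasoro 2) (M : MirrorHV) :
    ∃ φ : G.g ≃ₗ⁅ℂ⁆ M.M,
      (∀ m : ℤ, φ (G.Lg m) = (2 : ℂ) • M.d (-m)) ∧
      (∀ m : ℤ, φ (G.Ig (2 * m + 1)) = (2 : ℂ) • M.h (-m - 1)) ∧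
      φ (G.Cg 1) = (-2 : ℂ) • M.l ∧
      (∃ lam : ℂ, φ (G.Cg 0) = lam • M.c) := by
  classical
  have h01 : (0 : ℕ) ≤ 2 / 2 := by norm_num
  have h11 : (1 : ℕ) ≤ 2 / 2 := by norm_num
  -- basis identifications
  have hbL : ∀ m : ℤ, G.basis (Sum.inl m) = G.Lg m := fun m => G.basis_eq _
  have hbI : ∀ (b : ℤ) (hb : ¬ (((2 : ℕ) : ℤ)) ∣ b),
      G.basis (Sum.inr (Sum.inl ⟨b, hb⟩)) = G.Ig b := fun b hb => G.basis_eq _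
  have hbC0 : G.basis (Sum.inr (Sum.inr ⟨0, h01⟩)) = G.Cg 0 := G.basis_eq _
  have hbC1 : G.basis (Sum.inr (Sum.inr ⟨1, h11⟩)) = G.Cg 1 := G.basis_eq _
  have hMd : ∀ n : ℤ, M.basis (Sum.inl n) = M.d n := fun n => M.basis_eq _
  have hMh : ∀ n : ℤ, M.basis (Sum.inr (Sum.inl n)) = M.h n := fun n => M.basis_eq _
  have hMc : ∀ h : (0 : ℕ) < 2, M.basis (Sum.inr (Sum.inr ⟨0, h⟩)) = M.c := by
    intro h; rw [M.basis_eq]; rfl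
  have hMl : ∀ h : (1 : ℕ) < 2, M.basis (Sum.inr (Sum.inr ⟨1, h⟩)) = M.l := by
    intro h; rw [M.basis_eq]; rfl
  set φlin : G.g →ₗ[ℂ] M.M := G.basis.constr ℂ (gap2f M) with hφdef
  set ψlin : M.M →ₗ[ℂ] G.g := M.basis.constr ℂ (gap2g G) with hψdef
  -- evaluation of φlin
  have hφL : ∀ m : ℤ, φlin (G.Lg m) = (2 : ℂ) • M.d (-m) := by
    intro m; rw [← hbL m, hφdef, Module.Basis.constr_basis]; rfl
  have hφI : ∀ (b : ℤ) (hb : ¬ (((2 : ℕ) : ℤ)) ∣ b),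
      φlin (G.Ig b) = (2 : ℂ) • M.h ((-(b + 1)) / 2) := by
    intro b hb; rw [← hbI b hb, hφdef, Module.Basis.constr_basis]; rfl
  have hφC0 : φlin (G.Cg 0) = (-4 : ℂ) • M.c := by
    rw [← hbC0, hφdef, Module.Basis.constr_basis]; rfl
  have hφC1 : φlin (G.Cg 1) = (-2 : ℂ) • M.l := by
    rw [← hbC1, hφdef, Module.Basis.constr_basis]; rfl
  -- evaluation of ψlin
  have hψd : ∀ n : ℤ, ψlin (M.d n) = (1 / 2 : ℂ) • G.Lg (-n) := by
    intro n; rw [← hMd n, hψdef, Module.Basis.constr_basis]; rfl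
  have hψh : ∀ n : ℤ, ψlin (M.h n) = (1 / 2 : ℂ) • G.Ig (-2 * n - 1) := by
    intro n; rw [← hMh n, hψdef, Module.Basis.constr_basis]; rfl
  have hψc : ψlin M.c = (-1 / 4 : ℂ) • G.Cg 0 := by
    rw [← hMc (by norm_num), hψdef, Module.Basis.constr_basis]; rfl
  have hψl : ψlin M.l = (-1 / 2 : ℂ) • G.Cg 1 := by
    rw [← hMl (by norm_num), hψdef, Module.Basis.constr_basis]; rfl
  -- the compositions are the identity
  have hleft : ∀ x : G.g, ψlin (φlin x) = x := by
    have : ψlin.comp φlin = LinearMap.id := by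
      apply G.basis.ext; intro i
      rcases i with m | b | j
      · rw [LinearMap.comp_apply, LinearMap.id_apply, hbL, hφL, map_smul, hψd,
          smul_smul, neg_neg]
        norm_num
      · obtain ⟨b, hb⟩ := b
        have hb' : ¬ (2 : ℤ) ∣ b := by simpa using hb
        rw [LinearMap.comp_apply, LinearMap.id_apply, hbI, hφI b hb, map_smul, hψh,
          smul_smul]
        rw [show -2 * ((-(b + 1)) / 2) - 1 = b by omega]
        norm_num
      · obtain ⟨j, hj⟩ := j
        interval_cases j
        · rw [LinearMap.comp_apply, LinearMap.id_apply, hbC0, hφC0, map_smul, hψc,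
            smul_smul]
          norm_num
        · rw [LinearMap.comp_apply, LinearMap.id_apply, hbC1, hφC1, map_smul, hψl,
            smul_smul]
          norm_num
    intro x; exact LinearMap.congr_fun this x
  have hright : ∀ y : M.M, φlin (ψlin y) = y := by
    have : φlin.comp ψlin = LinearMap.id := by
      apply M.basis.ext; intro i
      rcases i with n | n | j
      · rw [LinearMap.comp_apply, LinearMap.id_apply, hMd, hψd, map_smul, hφL,
          smul_smul, neg_neg]
        norm_num
      · have hb' : ¬ (((2 : ℕ) : ℤ)) ∣ (-2 * n - 1) := by
          simp only [Nat.cast_ofNat]; omega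
        rw [LinearMap.comp_apply, LinearMap.id_apply, hMh, hψh, map_smul, hφI _ hb',
          smul_smul]
        rw [show (-(-2 * n - 1 + 1)) / 2 = n by omega]
        norm_num
      · rcases j with ⟨jv, hjv⟩
        interval_cases jv
        · rw [LinearMap.comp_apply, LinearMap.id_apply, hMc hjv, hψc, map_smul, hφC0,
            smul_smul]
          norm_num
        · rw [LinearMap.comp_apply, LinearMap.id_apply, hMl hjv, hψl, map_smul, hφC1,
            smul_smul]
          norm_num
    intro y; exact LinearMap.congr_fun this y
  -- bracket computations on generators
  have HLL : ∀ m n : ℤ, φlin ⁅G.Lg m, G.Lg n⁆ = ⁅φlin (G.Lg m), φlin (G.Lg n)⁆ := by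
    intro m n
    rw [G.bracket_LL m n, hφL, hφL, smul_lie, lie_smul, M.bracket_dd, map_add, map_smul,
      hφL]
    by_cases hmn : m + n = 0
    · rw [if_pos hmn, if_pos (show -m + -n = 0 by omega), map_smul, hφC0,
        show (-m) + -n = -(m + n) by ring]
      push_cast
      match_scalars <;> ring
    · rw [if_neg hmn, if_neg (show ¬ -m + -n = 0 by omega), map_zero,
        show (-m) + -n = -(m + n) by ring]
      push_cast
      match_scalars <;> ring
  have HLI : ∀ (m b : ℤ), ¬ (((2 : ℕ) : ℤ)) ∣ b →
      φlin ⁅G.Lg m, G.Ig b⁆ = ⁅φlin (G.Lg m), φlin (G.Ig b)⁆ := by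
    intro m b hb
    have hb' : ¬ (2 : ℤ) ∣ b := by simpa using hb
    have hb2 : ¬ (((2 : ℕ) : ℤ)) ∣ (((2 : ℕ) : ℤ) * m + b) := by
      simp only [Nat.cast_ofNat] at *; omega
    rw [G.bracket_LI m b hb, map_smul, hφI _ hb2, hφI b hb, hφL, smul_lie, lie_smul,
      M.bracket_dh]
    have hidx : (-(((2 : ℕ) : ℤ) * m + b + 1)) / 2 = -m + (-(b + 1)) / 2 := by
      simp only [Nat.cast_ofNat] at *; omega
    rw [hidx]
    have hx : (2 : ℂ) * (((-(b + 1)) / 2 : ℤ) : ℂ) = -((b : ℂ) + 1) := by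
      have : (2 : ℤ) * ((-(b + 1)) / 2) = -(b + 1) := by omega
      exact_mod_cast congrArg (Int.cast : ℤ → ℂ) this
    match_scalars
    linear_combination (2 : ℂ) * hx
  have HII : ∀ (a b : ℤ), ¬ (((2 : ℕ) : ℤ)) ∣ a → ¬ (((2 : ℕ) : ℤ)) ∣ b →
      φlin ⁅G.Ig a, G.Ig b⁆ = ⁅φlin (G.Ig a), φlin (G.Ig b)⁆ := by
    intro a b ha hb
    have ha' : ¬ (2 : ℤ) ∣ a := by simpa using ha
    have hb' : ¬ (2 : ℤ) ∣ b := by simpa using hb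
    have hmod : ((a % (((2 : ℕ) : ℤ))).toNat) = 1 := by
      simp only [Nat.cast_ofNat]; omega
    rw [G.bracket_II a b ha hb, hmod, hφI a ha, hφI b hb, smul_lie, lie_smul,
      M.bracket_hh]
    have hcond : ((-(a + 1)) / 2 + (-(b + 1)) / 2 + 1 = 0) ↔ (a + b = 0) := by
      omega
    by_cases hab : a + b = 0
    · rw [if_pos hab, if_pos (hcond.mpr hab)]
      have hmin : min 1 (2 - 1) = 1 := by norm_num
      rw [hmin, map_smul, hφC1]
      have hx : (2 : ℂ) * (((-(a + 1)) / 2 : ℤ) : ℂ) = -((a : ℂ) + 1) := by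
        have : (2 : ℤ) * ((-(a + 1)) / 2) = -(a + 1) := by omega
        exact_mod_cast congrArg (Int.cast : ℤ → ℂ) this
      match_scalars
      linear_combination (-2 : ℂ) * hx
    · rw [if_neg hab, if_neg (fun h => hab (hcond.mp h)), map_zero, smul_zero, smul_zero]
  have HC : ∀ j : ℕ, j ≤ 2 / 2 → ∀ x : G.g,
      φlin ⁅G.Cg j, x⁆ = ⁅φlin (G.Cg j), φlin x⁆ := by
    intro j hj x
    rw [G.central_C j hj x, map_zero]
    interval_cases j
    · rw [hφC0, smul_lie, M.central_c, smul_zero]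
    · rw [hφC1, smul_lie, M.central_l, smul_zero]
  have HCright : ∀ j : ℕ, j ≤ 2 / 2 → ∀ x : G.g,
      φlin ⁅x, G.Cg j⁆ = ⁅φlin x, φlin (G.Cg j)⁆ := by
    intro j hj x
    calc φlin ⁅x, G.Cg j⁆ = -φlin ⁅G.Cg j, x⁆ := by rw [← lie_skew, map_neg]
      _ = -⁅φlin (G.Cg j), φlin x⁆ := by rw [HC j hj x]
      _ = ⁅φlin x, φlin (G.Cg j)⁆ := lie_skew _ _
  -- full bracket compatibility by bilinearity
  have key2 : ∀ x y : G.g, φlin ⁅x, y⁆ = ⁅φlin x, φlin y⁆ := by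
    have H : (LinearMap.llcomp ℂ G.g G.g M.M φlin).comp
          (LieAlgebra.ad ℂ G.g).toLinearMap
        = ((LieAlgebra.ad ℂ M.M).toLinearMap.comp φlin).compl₂ φlin := by
      apply G.basis.ext; intro i
      apply G.basis.ext; intro j
      simp only [LinearMap.comp_apply, LinearMap.llcomp_apply, LinearMap.compl₂_apply,
        LieHom.coe_toLinearMap, LieAlgebra.ad_apply]
      rcases i with m | b | cj
      · rcases j with n | b | cj
        · rw [hbL, hbL]; exact HLL m n
        · obtain ⟨b, hb⟩ := b
          rw [hbL, hbI b hb]; exact HLI m b hb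
        · obtain ⟨cj, hcj⟩ := cj
          have : G.basis (Sum.inr (Sum.inr ⟨cj, hcj⟩)) = G.Cg cj := G.basis_eq _
          rw [this, hbL]; exact HCright cj hcj _
      · obtain ⟨a, ha⟩ := b
        rcases j with n | b | cj
        · rw [hbI a ha, hbL]
          calc φlin ⁅G.Ig a, G.Lg n⁆ = -φlin ⁅G.Lg n, G.Ig a⁆ := by
                rw [← lie_skew, map_neg]
            _ = -⁅φlin (G.Lg n), φlin (G.Ig a)⁆ := by rw [HLI n a ha]
            _ = ⁅φlin (G.Ig a), φlin (G.Lg n)⁆ := lie_skew _ _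
        · obtain ⟨b, hb⟩ := b
          rw [hbI a ha, hbI b hb]; exact HII a b ha hb
        · obtain ⟨cj, hcj⟩ := cj
          have : G.basis (Sum.inr (Sum.inr ⟨cj, hcj⟩)) = G.Cg cj := G.basis_eq _
          rw [this, hbI a ha]; exact HCright cj hcj _
      · obtain ⟨cj, hcj⟩ := cj
        have : G.basis (Sum.inr (Sum.inr ⟨cj, hcj⟩)) = G.Cg cj := G.basis_eq _
        rw [this]; exact HC cj hcj _
    intro x y
    exact LinearMap.congr_fun (LinearMap.congr_fun H x) y
  -- assemble the Lie algebra isomorphism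
  refine ⟨{ toLinearMap := φlin
            map_lie' := fun {x y} => key2 x y
            invFun := ψlin
            left_inv := hleft
            right_inv := hright }, ?_, ?_, ?_, ⟨-4, ?_⟩⟩
  · intro m; exact hφL m
  · intro m
    have hb : ¬ (((2 : ℕ) : ℤ)) ∣ (2 * m + 1) := by
      simp only [Nat.cast_ofNat]; omega
    have := hφI (2 * m + 1) hb
    rw [show (-(2 * m + 1 + 1)) / 2 = -m - 1 by omega] at this
    exact this
  · exact hφC1
  · exact hφC0
end

section
/- Let α, β ∈ ℂ, γ ∈ ℂ^×, and let Q ⊆ {0,1} be nonempty. Then for every s ≥ 1, all l, m ∈ ℤ and every u ∈ A(α,β,γ,Q), one has Ω^{(1,1,s)}_{l,m} · u = 0 (hence the same holds on every subquotient of A(α,β,γ,Q), in particular on its unique irreducible subquotient A'(α,β,γ,Q)). -/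
open Finsupp TensorProduct

attribute [local instance 100] LieRing.ofAssociativeRing

/-- for every `s ≥ 1` and all `l, m ∈ ℤ`, the operator `Ω^{(1,1,s)}_{l,m}`
annihilates the module of intermediate series `A(α, β, γ, Q)` over the gap-2 Virasoro
algebra (hence also every subquotient of it, in particular `A'(α, β, γ, Q)`). -/
theorem omega_annihilates_intermediate_series (G : GapVirasoro 2)
    (α β γ : ℂ) (hγ : γ ≠ 0)
    (Q : Finset ℕ) (hQ : Q.Nonempty) (hQsub : Q ⊆ Finset.range 2)
    (ρ : G.g →ₗ⁅ℂ⁆ Module.End ℂ (PIdx 2 Q →₀ ℂ)) (hρ : IsARep G α β γ Q ρ)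
    (s : ℕ) (hs : 1 ≤ s) (l m : ℤ) (u : PIdx 2 Q →₀ ℂ) :
    OmegaOp ρ G.Ig 2 1 1 l m s u = 0 := by
  classical
  obtain ⟨hL, hI, hC0, hC1⟩ := hρ
  have e2 : (((2:ℕ):ℤ)) = 2 := by norm_num
  -- single-step action
  have step : ∀ (a : ℤ) (k : PIdx 2 Q),
      ρ (G.Ig (2*a+1)) (Finsupp.single k (1:ℂ)) =
        if h : (((1 + k.1) % 2).toNat) ∈ Q then
          (if k.1 % 2 = 0 then (1:ℂ) else γ) •
            Finsupp.single (⟨2*a+1+k.1, mem_shift h a⟩ : PIdx 2 Q) 1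
        else 0 := by
    intro a k
    exact hI a k
  -- membership for shifted indices
  have pfW : ∀ (x : ℤ) (k₀ : PIdx 2 Q), x % 2 = k₀.1 % 2 → (((x % 2).toNat) ∈ Q) := by
    intro x k₀ h
    rw [h]; exact k₀.2
  have pfW' : ∀ (x : ℤ) (k₀ : PIdx 2 Q), x % 2 = k₀.1 % 2 → (((x % ((2:ℕ):ℤ)).toNat) ∈ Q) := by
    intro x k₀ h; rw [e2]; exact pfW x k₀ h
  -- composite action
  have hcomp : ∀ (a b : ℤ) (k₀ : PIdx 2 Q),
      ρ (G.Ig (2*a+1)) (ρ (G.Ig (2*b+1)) (Finsupp.single k₀ (1:ℂ))) =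
      (if (((1 + k₀.1) % 2).toNat) ∈ Q then
        ((if k₀.1 % 2 = 0 then (1:ℂ) else γ) * (if (1+k₀.1) % 2 = 0 then (1:ℂ) else γ)) •
          Finsupp.single (⟨2*(a+b+1)+k₀.1, pfW' _ k₀ (by omega)⟩ : PIdx 2 Q) 1
      else 0) := by
    intro a b k₀
    rw [step b k₀]
    by_cases h₁ : (((1 + k₀.1) % 2).toNat) ∈ Q
    · rw [dif_pos h₁, if_pos h₁]
      erw [map_smul]
      erw [
        step a ⟨2*b+1+k₀.1, mem_shift h₁ b⟩]
      have hc2 : (((1 + (2*b+1+k₀.1)) % 2).toNat) ∈ Q := by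
        have hmod : (1 + (2*b+1+k₀.1)) % 2 = k₀.1 % 2 := by omega
        rw [hmod]; exact k₀.2
      rw [dif_pos hc2]
      have hidx : (⟨2*a+1+(2*b+1+k₀.1), mem_shift hc2 a⟩ : PIdx 2 Q) =
          ⟨2*(a+b+1)+k₀.1, pfW' _ k₀ (by omega)⟩ := Subtype.ext (by ring)
      rw [hidx]
      erw [smul_smul]
      congr 1
      have hcoef : ((2*b+1+k₀.1) % 2 = 0) ↔ ((1+k₀.1) % 2 = 0) := by omega
      by_cases hk : (1+k₀.1) % 2 = 0
      · rw [if_pos (hcoef.mpr hk), if_pos hk]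
      · rw [if_neg (fun h => hk (hcoef.mp h)), if_neg hk]
    · rw [dif_neg h₁, if_neg h₁]
      erw [map_zero]
      rfl
  -- alternating binomial sum vanishes
  have hsum : (∑ k ∈ Finset.range (s+1), (-1:ℂ)^(s-k) * (s.choose k : ℂ)) = 0 := by
    have hbin := add_pow (1:ℂ) (-1) s
    simp only [one_pow, one_mul] at hbin
    rw [← hbin]
    have : (1:ℂ) + (-1) = 0 := by ring
    rw [this, zero_pow (by omega : s ≠ 0)]
  induction u using Finsupp.induction_linear with
  | zero => simp
  | add f g hf hg => rw [map_add, hf, hg, add_zero]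
  | single k₀ c =>
    have hc : Finsupp.single k₀ c = c • Finsupp.single k₀ (1:ℂ) := by
      rw [Finsupp.smul_single', mul_one]
    rw [hc, map_smul]
    suffices h : OmegaOp ρ G.Ig 2 1 1 l m s (Finsupp.single k₀ (1:ℂ)) = 0 by
      rw [h, smul_zero]
    unfold OmegaOp
    rw [LinearMap.sum_apply]
    set W : PIdx 2 Q →₀ ℂ :=
      (if (((1 + k₀.1) % 2).toNat) ∈ Q then
        ((if k₀.1 % 2 = 0 then (1:ℂ) else γ) * (if (1+k₀.1) % 2 = 0 then (1:ℂ) else γ)) •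
          Finsupp.single (⟨2*(l+1)+k₀.1, pfW' _ k₀ (by omega)⟩ : PIdx 2 Q) 1
      else 0) with hW
    have key : ∀ k ∈ Finset.range (s+1),
        (((-1 : ℂ) ^ (s - k) * (s.choose k : ℂ)) •
          (ρ (G.Ig (((2:ℕ) : ℤ) * l - ((2:ℕ) : ℤ) * m - ((2:ℕ) : ℤ) * (k:ℤ) + ((1:ℕ) : ℤ))) *
           ρ (G.Ig (((2:ℕ) : ℤ) * m + ((2:ℕ) : ℤ) * (k:ℤ) + ((1:ℕ) : ℤ)))))
          (Finsupp.single k₀ (1:ℂ)) =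
        ((-1 : ℂ) ^ (s - k) * (s.choose k : ℂ)) • W := by
      intro k hk
      rw [LinearMap.smul_apply, Module.End.mul_apply]
      have ea : ((2:ℕ) : ℤ) * l - ((2:ℕ) : ℤ) * m - ((2:ℕ) : ℤ) * (k:ℤ) + ((1:ℕ) : ℤ)
          = 2*(l - m - (k:ℤ)) + 1 := by push_cast; ring
      have eb : ((2:ℕ) : ℤ) * m + ((2:ℕ) : ℤ) * (k:ℤ) + ((1:ℕ) : ℤ)
          = 2*(m + (k:ℤ)) + 1 := by push_cast; ring
      rw [ea, eb, hcomp (l - m - (k:ℤ)) (m + (k:ℤ)) k₀, hW]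
      by_cases h₁ : (((1 + k₀.1) % 2).toNat) ∈ Q
      · rw [if_pos h₁, if_pos h₁]
        have hidx : (⟨2*((l - m - (k:ℤ)) + (m + (k:ℤ)) + 1)+k₀.1, pfW' _ k₀ (by omega)⟩ : PIdx 2 Q) =
            ⟨2*(l+1)+k₀.1, pfW' _ k₀ (by omega)⟩ := Subtype.ext (by ring)
        rw [hidx]
        rfl
      · rw [if_neg h₁, if_neg h₁, smul_zero]
        exact smul_zero (M := ℂ) (A := PIdx 2 Q →₀ ℂ) _
    rw [Finset.sum_congr rfl key, ← Finset.sum_smul, hsum, zero_smul]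
end

section
/- Let a ∈ ℂ, d = (d_0,…,d_{p−1}) ∈ {0,1}^p, let V be an irreducible 𝔗_{min(d_0,…,d_{p−1})}-module with annihilating level (h, q) for some h, q ∈ ℕ, and let f = Σ_i a_i x^i ∈ ℂ[x^{±1}]. Then the operations L_m ∘ w = L_m · w + Σ_i a_i (I_{m+i} · w), I_m ∘ w = I_m · w, and C_L, C_LI, C_I acting as 0, where · denotes the action on M(V, a, d), define a new 𝔗-module structure M^f(V, a, d) on V ⊗ ℂ[x^{±1}], and the 𝔗-module M^f(V, a, d) is irreducible. -/
open Finsupp TensorProduct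

attribute [instance 100] LieRing.ofAssociativeRing

/-- If a `V`-valued polynomial expression lies in a subspace `X` for infinitely many
integer evaluation points, then each coefficient lies in `X`. -/
lemma poly_extract {V : Type} [AddCommGroup V] [Module ℂ V] (X : Submodule ℂ V)
    (N : ℕ) (g : ℕ → V) (φ : ℤ → ℤ) (hφ : Function.Injective φ)
    (hS : ∀ m : ℤ, (∑ r ∈ Finset.range N, (((φ m : ℤ) : ℂ) ^ r) • g r) ∈ X) :
    ∀ r, r < N → g r ∈ X := by
  intro r₀ hr₀
  by_contra hg
  set π := X.mkQ with hπ
  have hc0 : ∀ m : ℤ, ∑ r ∈ Finset.range N, (((φ m : ℤ) : ℂ) ^ r) • π (g r) = 0 := by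
    intro m
    have h1 : π (∑ r ∈ Finset.range N, (((φ m : ℤ) : ℂ) ^ r) • g r) = 0 := by
      rw [Submodule.mkQ_apply, Submodule.Quotient.mk_eq_zero]
      exact hS m
    rw [map_sum] at h1
    simpa [map_smul] using h1
  have hcr : π (g r₀) ≠ 0 := by
    intro hh
    exact hg ((Submodule.Quotient.mk_eq_zero X).mp hh)
  -- pick a coordinate functional separating π (g r₀) from 0
  set Q := V ⧸ X
  let b := Module.Free.chooseBasis ℂ Q
  have : b.repr (π (g r₀)) ≠ 0 := fun hh => hcr (by simpa using congrArg b.repr.symm hh)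
  obtain ⟨ι, hι⟩ : ∃ ι, b.repr (π (g r₀)) ι ≠ 0 := by
    by_contra hc
    push_neg at hc
    exact this (Finsupp.ext hc)
  set c : ℕ → ℂ := fun r => b.repr (π (g r)) ι with hc
  set P : Polynomial ℂ := ∑ r ∈ Finset.range N, Polynomial.monomial r (c r) with hP
  have heval : ∀ m : ℤ, P.eval ((φ m : ℤ) : ℂ) = 0 := by
    intro m
    have h2 : (b.coord ι) (∑ r ∈ Finset.range N, (((φ m : ℤ) : ℂ) ^ r) • π (g r)) = 0 := by
      rw [hc0 m]; simp
    rw [map_sum] at h2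
    rw [hP]
    rw [Polynomial.eval_finset_sum]
    simp only [Polynomial.eval_monomial]
    rw [← h2]
    apply Finset.sum_congr rfl
    intro r _
    rw [map_smul]
    simp [hc, Module.Basis.coord_apply, smul_eq_mul, mul_comm]
  have hPzero : P = 0 := by
    apply Polynomial.eq_zero_of_infinite_isRoot
    apply Set.Infinite.mono (s := Set.range (fun m : ℤ => ((φ m : ℤ) : ℂ)))
    · rintro x ⟨m, rfl⟩
      exact heval m
    · exact Set.infinite_range_of_injective (fun x y hxy => hφ (by exact_mod_cast hxy))
  have hco : P.coeff r₀ = c r₀ := by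
    rw [hP, Polynomial.finset_sum_coeff]
    simp only [Polynomial.coeff_monomial]
    rw [Finset.sum_ite_eq' (Finset.range N) r₀ c]
    simp [hr₀]
  rw [hPzero] at hco
  simp only [Polynomial.coeff_zero] at hco
  exact hι hco.symm

/-- If a submodule of `ℤ →₀ V` is invariant under a "diagonal" operator `D` with
pairwise distinct eigenvalues `a + k` on the components, then it contains all
components of its elements. -/
lemma components_mem {V : Type} [AddCommGroup V] [Module ℂ V]
    (W : Submodule ℂ (ℤ →₀ V)) (a : ℂ) (D : Module.End ℂ (ℤ →₀ V))
    (hD : ∀ (k : ℤ) (v : V), D (single k v) = (a + k) • single k v)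
    (hWD : ∀ w ∈ W, D w ∈ W) :
    ∀ w ∈ W, ∀ k, single k (w k) ∈ W := by
  have hDval : ∀ (w : ℤ →₀ V) (k' : ℤ), (D w) k' = (a + k') • (w k') := by
    intro w k'
    have h1 : D w = ∑ k ∈ w.support, (a + (k : ℂ)) • single k (w k) := by
      conv_lhs => rw [← Finsupp.sum_single w, Finsupp.sum, map_sum]
      exact Finset.sum_congr rfl fun k _ => hD k (w k)
    rw [h1, Finsupp.finset_sum_apply]
    rw [Finset.sum_eq_single k']
    · rw [Finsupp.smul_apply, Finsupp.single_eq_same]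
    · intro b _ hb
      rw [Finsupp.smul_apply, Finsupp.single_eq_of_ne' hb, smul_zero]
    · intro hk'
      rw [Finsupp.notMem_support_iff.mp hk']
      simp
  suffices H : ∀ n (w : ℤ →₀ V), w ∈ W → w.support.card ≤ n → ∀ k, single k (w k) ∈ W by
    intro w hw k; exact H w.support.card w hw le_rfl k
  intro n
  induction n with
  | zero =>
    intro w hw hc k
    have : w = 0 := by
      rw [← Finsupp.support_eq_empty]
      exact Finset.card_eq_zero.mp (Nat.le_zero.mp hc)
    simp [this]
  | succ n ih =>
    intro w hw hc k
    by_cases hk : k ∈ w.support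
    case neg =>
      rw [Finsupp.notMem_support_iff.mp hk]
      simp
    by_cases hsub : w.support ⊆ {k}
    case pos =>
      have : w = single k (w k) := Finsupp.eq_single_iff.mpr ⟨hsub, rfl⟩
      exact this ▸ hw
    obtain ⟨k', hk'supp, hk'ne⟩ : ∃ k' ∈ w.support, k' ≠ k := by
      obtain ⟨x, hx1, hx2⟩ := Finset.not_subset.mp hsub
      exact ⟨x, hx1, by simpa using hx2⟩
    set w' := D w - (a + (k' : ℂ)) • w with hw'def
    have hw' : w' ∈ W := W.sub_mem (hWD w hw) (W.smul_mem _ hw)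
    have hval : ∀ x : ℤ, w' x = ((x : ℂ) - (k' : ℂ)) • w x := by
      intro x
      rw [hw'def, Finsupp.sub_apply, Finsupp.smul_apply, hDval]
      rw [← sub_smul]; ring_nf
    have hsupp' : w'.support ⊆ w.support.erase k' := by
      intro x hx
      rw [Finsupp.mem_support_iff, hval] at hx
      rw [Finset.mem_erase, Finsupp.mem_support_iff]
      refine ⟨fun hxk => hx ?_, fun hwx => hx (by rw [hwx, smul_zero])⟩
      rw [hxk]; simp
    have hcard : w'.support.card ≤ n := by
      have h1 := Finset.card_le_card hsupp'
      have h2 := Finset.card_erase_of_mem hk'supp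
      have h3 : 1 ≤ w.support.card := Finset.card_pos.mpr ⟨k, hk⟩
      omega
    have h1 := ih w' hw' hcard k
    rw [hval] at h1
    have hcne : ((k : ℂ) - (k' : ℂ)) ≠ 0 := by
      rw [sub_ne_zero]
      exact_mod_cast fun hh => hk'ne (by exact_mod_cast hh.symm)
    have h2 := W.smul_mem ((k : ℂ) - (k' : ℂ))⁻¹ h1
    rwa [← Finsupp.smul_single, smul_smul, inv_mul_cancel₀ hcne, one_smul] at h2
section MainSimple

open Finset in
lemma main_simple (p : ℕ) (hp : 1 < p) (d : ℕ → ℕ) (a : ℂ) (h q : ℕ)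
    (R : THVRep (dmin p d)) (hRsim : R.IsSimple) (hlev : R.AnnLevel h q)
    (hdh : ∀ i : ℕ, i < p → d i ≤ h)
    (Lact Iact : ℤ → Module.End ℂ (ℤ →₀ R.V))
    (hL : ∀ (m k : ℤ) (v : R.V), Lact m (single k v) =
      single (m + k) ((a + (k : ℂ)) • v +
        ∑ j ∈ range (q + 1), (((m : ℂ) ^ (j + 1)) * (((j + 1).factorial : ℂ))⁻¹) • R.LV j v))
    (hI : ∀ (b k : ℤ) (v : R.V), Iact b (single k v) =
      single (b + k) (∑ s ∈ range (h + 2), (((b : ℂ) ^ s) * ((s.factorial : ℂ))⁻¹) •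
        (if d ((b % (p : ℤ)).toNat) ≤ s then R.IV s v else 0)))
    (W : Submodule ℂ (ℤ →₀ R.V))
    (hWL : ∀ m : ℤ, ∀ w ∈ W, Lact m w ∈ W)
    (hWI : ∀ b : ℤ, ∀ w ∈ W, Iact b w ∈ W)
    (hW0 : W ≠ ⊥) : W = ⊤ := by
  obtain ⟨hn₀h, ⟨vh, hvh⟩, -, hIVtop, hLVtop⟩ := hlev
  have hppos : 0 < p := by omega
  have hpz : ((p : ℤ)) ≠ 0 := by exact_mod_cast hppos.ne'
  -- residue class computations
  have hcls : ∀ (i : ℕ), i < p → ∀ m : ℤ, ((((p : ℤ) * m + (i : ℤ)) % (p : ℤ)).toNat) = i := by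
    intro i hi m
    have h1 : ((p : ℤ) * m + (i : ℤ)) % (p : ℤ) = (i : ℤ) % (p : ℤ) := by
      rw [add_comm, mul_comm]
      exact Int.add_mul_emod_self_right _ _ _
    have h2 : (i : ℤ) % (p : ℤ) = (i : ℤ) := by
      apply Int.emod_eq_of_lt (by positivity)
      exact_mod_cast hi
    rw [h1, h2, Int.toNat_natCast]
  have hcls2 : ∀ t m : ℤ, (((t - (p : ℤ) * m) % (p : ℤ)).toNat) = ((t % (p : ℤ)).toNat) := by
    intro t m
    congr 1
    have : t - (p : ℤ) * m = t + (-m) * (p : ℤ) := by ring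
    rw [this, Int.add_mul_emod_self_right]
  have hdc : ∀ c : ℤ, d ((c % (p : ℤ)).toNat) ≤ h := by
    intro c
    apply hdh
    have h1 : 0 ≤ c % (p : ℤ) := Int.emod_nonneg c hpz
    have h2 : c % (p : ℤ) < (p : ℤ) := Int.emod_lt_of_pos c (by positivity)
    omega
  -- the component submodules
  set U : ℤ → Submodule ℂ R.V := fun k => Submodule.comap (Finsupp.lsingle k) W with hUdef
  have hUmem : ∀ (k : ℤ) (v : R.V), v ∈ U k ↔ single k v ∈ W := by
    intro k v
    rw [hUdef]
    simp [Submodule.mem_comap, Finsupp.lsingle_apply]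
  -- transitions
  have hUL : ∀ (k m : ℤ) (v : R.V), v ∈ U k →
      ((a + (k : ℂ)) • v + ∑ j ∈ range (q + 1),
        (((m : ℂ) ^ (j + 1)) * (((j + 1).factorial : ℂ))⁻¹) • R.LV j v) ∈ U (m + k) := by
    intro k m v hv
    rw [hUmem] at hv ⊢
    rw [← hL]
    exact hWL m _ hv
  have hUI : ∀ (k b : ℤ) (v : R.V), v ∈ U k →
      (∑ s ∈ range (h + 2), (((b : ℂ) ^ s) * ((s.factorial : ℂ))⁻¹) •
        (if d ((b % (p : ℤ)).toNat) ≤ s then R.IV s v else 0)) ∈ U (b + k) := by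
    intro k b v hv
    rw [hUmem] at hv ⊢
    rw [← hI]
    exact hWI b _ hv
  -- the diagonal operator
  have hDk : ∀ (k : ℤ) (v : R.V), Lact 0 (single k v) = (a + (k : ℂ)) • single k v := by
    intro k v
    rw [hL]
    have hz : ∀ j : ℕ, ((0 : ℤ) : ℂ) ^ (j + 1) = 0 := by
      intro j; simp
    simp only [hz, zero_mul, zero_smul, Finset.sum_const_zero, add_zero, zero_add]
    rw [Finsupp.smul_single]
  have hcomp : ∀ w ∈ W, ∀ k, single k (w k) ∈ W :=
    components_mem W a (Lact 0) hDk (hWL 0)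
  -- commutation relations on V
  have hIVLV : ∀ (kk : ℕ) (v : R.V),
      R.IV h (R.LV kk v) = R.LV kk (R.IV h v) - (h : ℂ) • R.IV (kk + h) v := by
    intro kk v
    have h1 := R.comm_LI kk h hn₀h
    rw [Ring.lie_def] at h1
    have h2 := LinearMap.ext_iff.mp h1 v
    simp only [LinearMap.sub_apply, Module.End.mul_apply, LinearMap.smul_apply] at h2
    rw [eq_sub_iff_add_eq, ← h2]
    abel
  have hIVIV : ∀ (s : ℕ), dmin p d ≤ s → ∀ v : R.V,
      R.IV h (R.IV s v) = R.IV s (R.IV h v) := by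
    intro s hs v
    have h1 := R.comm_II s h hs hn₀h
    rw [Ring.lie_def, sub_eq_zero] at h1
    have h2 := LinearMap.ext_iff.mp h1 v
    simp only [Module.End.mul_apply] at h2
    exact h2.symm
  -- injectivity of IV h
  have hinj : ∀ v : R.V, R.IV h v = 0 → v = 0 := by
    have hK1 : ∀ kk : ℕ, ∀ v ∈ LinearMap.ker (R.IV h), R.LV kk v ∈ LinearMap.ker (R.IV h) := by
      intro kk v hv
      rw [LinearMap.mem_ker] at hv ⊢
      rw [hIVLV kk v, hv, map_zero, zero_sub, neg_eq_zero]
      rcases Nat.eq_zero_or_pos kk with hkk | hkk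
      · rw [hkk, zero_add, hv, smul_zero]
      · rw [hIVtop (kk + h) (by omega) v, smul_zero]
    have hK2 : ∀ s : ℕ, dmin p d ≤ s → ∀ v ∈ LinearMap.ker (R.IV h),
        R.IV s v ∈ LinearMap.ker (R.IV h) := by
      intro s hs v hv
      rw [LinearMap.mem_ker] at hv ⊢
      rw [hIVIV s hs v, hv, map_zero]
    rcases hRsim.2 _ hK1 hK2 with hbot | htop
    · intro v hv
      have : v ∈ LinearMap.ker (R.IV h) := LinearMap.mem_ker.mpr hv
      rw [hbot] at this
      simpa using this
    · exfalso
      exact hvh (LinearMap.mem_ker.mp (htop ▸ Submodule.mem_top))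
  -- Step 8 : transporting a vector to every position
  have hstep8 : ∀ (k k' : ℤ) (v : R.V), v ∈ U k → R.IV h (R.IV h v) ∈ U k' := by
    intro k k' v hv
    set t : ℤ := k' - k with ht
    set δ₂ : ℕ := d ((t % (p : ℤ)).toNat) with hδ₂
    set A : ℕ → Module.End ℂ R.V :=
      fun s => ((s.factorial : ℂ))⁻¹ • (if d ((0 : ℤ) % (p : ℤ)).toNat ≤ s then R.IV s else 0) with hA
    set B : ℕ → Module.End ℂ R.V :=
      fun s => ((s.factorial : ℂ))⁻¹ • (if δ₂ ≤ s then R.IV s else 0) with hB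
    have hAv : ∀ (s : ℕ) (x : R.V),
        A s x = ((s.factorial : ℂ))⁻¹ • (if d ((0 : ℤ) % (p : ℤ)).toNat ≤ s then R.IV s x else 0) := by
      intro s x
      rw [hA]
      simp only [LinearMap.smul_apply]
      congr 1
      split_ifs <;> simp
    have hBv : ∀ (s : ℕ) (x : R.V),
        B s x = ((s.factorial : ℂ))⁻¹ • (if δ₂ ≤ s then R.IV s x else 0) := by
      intro s x
      rw [hB]
      simp only [LinearMap.smul_apply]
      congr 1
      split_ifs <;> simp
    have hA0 : ∀ x : R.V, A (h + 1) x = 0 := by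
      intro x
      rw [hAv]
      rw [hIVtop (h + 1) (by omega) x]
      split_ifs <;> simp
    have hB0 : ∀ x : R.V, B (h + 1) x = 0 := by
      intro x
      rw [hBv]
      rw [hIVtop (h + 1) (by omega) x]
      split_ifs <;> simp
    have hcl0 : (((p : ℤ) * 0 + ((0 : ℕ) : ℤ)) % (p : ℤ)).toNat = 0 := hcls 0 hppos 0
    -- membership of the two-step values
    have hmem : ∀ m : ℤ,
        (∑ s' ∈ range (h + 2), ((((t - (p : ℤ) * m : ℤ)) : ℂ) ^ s' * ((s'.factorial : ℂ))⁻¹) •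
          (if δ₂ ≤ s' then R.IV s'
            (∑ s ∈ range (h + 2), (((((p : ℤ) * m : ℤ)) : ℂ) ^ s * ((s.factorial : ℂ))⁻¹) •
              (if d ((((p : ℤ) * m) % (p : ℤ)).toNat) ≤ s then R.IV s v else 0)) else 0)) ∈ U k' := by
      intro m
      have h1 := hUI k ((p : ℤ) * m) v hv
      have h2 := hUI ((p : ℤ) * m + k) (t - (p : ℤ) * m) _ h1
      have hidx : (t - (p : ℤ) * m) + ((p : ℤ) * m + k) = k' := by rw [ht]; ring
      rw [hidx] at h2
      have hclt : d (((t - (p : ℤ) * m) % (p : ℤ)).toNat) = δ₂ := by rw [hδ₂, hcls2]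
      rw [hclt] at h2
      exact h2
    -- the coefficient family
    set g : ℕ → R.V := fun r => ∑ s' ∈ range (h + 2), ∑ s ∈ range (h + 2), ∑ u ∈ range (s' + 1),
      (if u + s = r then (((s'.choose u : ℕ) : ℂ) * (-1 : ℂ) ^ u * (t : ℂ) ^ (s' - u)) •
        B s' (A s v) else 0) with hg
    have hgr : ∀ r : ℕ, g r = ∑ s' ∈ range (h + 2), ∑ s ∈ range (h + 2), ∑ u ∈ range (s' + 1),
      (if u + s = r then (((s'.choose u : ℕ) : ℂ) * (-1 : ℂ) ^ u * (t : ℂ) ^ (s' - u)) •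
        B s' (A s v) else 0) := fun r => rfl
    have hexp : ∀ c : ℂ,
        (∑ s' ∈ range (h + 2), (((t : ℂ) - c) ^ s' * ((s'.factorial : ℂ))⁻¹) •
          (if δ₂ ≤ s' then R.IV s'
            (∑ s ∈ range (h + 2), (c ^ s * ((s.factorial : ℂ))⁻¹) •
              (if d ((0 : ℤ) % (p : ℤ)).toNat ≤ s then R.IV s v else 0)) else 0))
        = ∑ r ∈ range (2 * h + 3), c ^ r • g r := by
      intro c
      have lhs1 : ∀ s' : ℕ,
          (((t : ℂ) - c) ^ s' * ((s'.factorial : ℂ))⁻¹) •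
            (if δ₂ ≤ s' then R.IV s'
              (∑ s ∈ range (h + 2), (c ^ s * ((s.factorial : ℂ))⁻¹) •
                (if d ((0 : ℤ) % (p : ℤ)).toNat ≤ s then R.IV s v else 0)) else 0)
          = ∑ s ∈ range (h + 2), (((t : ℂ) - c) ^ s' * c ^ s) • B s' (A s v) := by
        intro s'
        have e1 : (∑ s ∈ range (h + 2), (c ^ s * ((s.factorial : ℂ))⁻¹) •
            (if d ((0 : ℤ) % (p : ℤ)).toNat ≤ s then R.IV s v else 0))
            = ∑ s ∈ range (h + 2), c ^ s • A s v := by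
          apply Finset.sum_congr rfl
          intro s _
          rw [hAv, mul_smul]
        rw [e1]
        have e2 : (if δ₂ ≤ s' then R.IV s' (∑ s ∈ range (h + 2), c ^ s • A s v) else 0)
            = ∑ s ∈ range (h + 2), c ^ s • (if δ₂ ≤ s' then R.IV s' (A s v) else 0) := by
          split_ifs
          · rw [map_sum]
            apply Finset.sum_congr rfl
            intro s _
            rw [map_smul]
          · simp
        rw [e2, Finset.smul_sum]
        apply Finset.sum_congr rfl
        intro s _
        rw [hBv]
        simp only [smul_smul]
        congr 1
        ring
      have hbin : ∀ s' : ℕ, ((t : ℂ) - c) ^ s'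
          = ∑ u ∈ range (s' + 1), (((s'.choose u : ℕ) : ℂ) * (-1 : ℂ) ^ u * (t : ℂ) ^ (s' - u)) * c ^ u := by
        intro s'
        rw [sub_eq_add_neg, add_comm, add_pow]
        apply Finset.sum_congr rfl
        intro u _
        rw [neg_pow]
        ring
      have hLHS : (∑ s' ∈ range (h + 2), ∑ s ∈ range (h + 2),
            (((t : ℂ) - c) ^ s' * c ^ s) • B s' (A s v))
          = ∑ s' ∈ range (h + 2), ∑ s ∈ range (h + 2), ∑ u ∈ range (s' + 1),
            ((((s'.choose u : ℕ) : ℂ) * (-1 : ℂ) ^ u * (t : ℂ) ^ (s' - u) * c ^ (u + s)) •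
              B s' (A s v)) := by
        apply Finset.sum_congr rfl
        intro s' _
        apply Finset.sum_congr rfl
        intro s _
        rw [hbin s', Finset.sum_mul, Finset.sum_smul]
        apply Finset.sum_congr rfl
        intro u _
        rw [pow_add]
        congr 1
        ring
      have hRHS : (∑ r ∈ range (2 * h + 3), c ^ r • g r)
          = ∑ s' ∈ range (h + 2), ∑ s ∈ range (h + 2), ∑ u ∈ range (s' + 1),
            ((((s'.choose u : ℕ) : ℂ) * (-1 : ℂ) ^ u * (t : ℂ) ^ (s' - u) * c ^ (u + s)) •
              B s' (A s v)) := by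
        rw [hg]
        simp only [Finset.smul_sum, smul_ite, smul_zero, smul_smul]
        rw [Finset.sum_comm]
        apply Finset.sum_congr rfl
        intro s' hs'
        rw [Finset.sum_comm]
        apply Finset.sum_congr rfl
        intro s hs
        rw [Finset.sum_comm]
        apply Finset.sum_congr rfl
        intro u hu
        rw [Finset.sum_ite_eq (range (2 * h + 3)) (u + s)
          (fun r => (c ^ r * (((s'.choose u : ℕ) : ℂ) * (-1 : ℂ) ^ u * (t : ℂ) ^ (s' - u))) •
            B s' (A s v))]
        rw [if_pos]
        · congr 1
          ring
        · rw [Finset.mem_range] at hs' hs hu ⊢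
          omega
      calc (∑ s' ∈ range (h + 2), (((t : ℂ) - c) ^ s' * ((s'.factorial : ℂ))⁻¹) •
          (if δ₂ ≤ s' then R.IV s'
            (∑ s ∈ range (h + 2), (c ^ s * ((s.factorial : ℂ))⁻¹) •
              (if d ((0 : ℤ) % (p : ℤ)).toNat ≤ s then R.IV s v else 0)) else 0))
          = ∑ s' ∈ range (h + 2), ∑ s ∈ range (h + 2),
            (((t : ℂ) - c) ^ s' * c ^ s) • B s' (A s v) :=
            Finset.sum_congr rfl (fun s' _ => lhs1 s')
        _ = ∑ s' ∈ range (h + 2), ∑ s ∈ range (h + 2), ∑ u ∈ range (s' + 1),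
            ((((s'.choose u : ℕ) : ℂ) * (-1 : ℂ) ^ u * (t : ℂ) ^ (s' - u) * c ^ (u + s)) •
              B s' (A s v)) := hLHS
        _ = ∑ r ∈ range (2 * h + 3), c ^ r • g r := hRHS.symm
    have hφinj : Function.Injective (fun m : ℤ => (p : ℤ) * m) :=
      fun x y hh => mul_left_cancel₀ hpz hh
    have hgmem : ∀ r, r < 2 * h + 3 → g r ∈ U k' := by
      apply poly_extract (U k') (2 * h + 3) g (fun m : ℤ => (p : ℤ) * m) hφinj
      intro m
      have h1 := hmem m
      have hc1 : (((t - (p : ℤ) * m : ℤ)) : ℂ) = (t : ℂ) - ((((p : ℤ) * m : ℤ)) : ℂ) := by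
        push_cast
        ring
      have hc2 : d ((((p : ℤ) * m) % (p : ℤ)).toNat) = d (((0 : ℤ) % (p : ℤ)).toNat) := by
        congr 1
        have e1 : (p : ℤ) * m = 0 - (p : ℤ) * (-m) := by ring
        rw [e1, hcls2]
      rw [hc1, hc2, hexp ((((p : ℤ) * m : ℤ)) : ℂ)] at h1
      exact h1
    -- evaluate the top coefficient g (2 * h)
    have hterm0 : ∀ s' s u : ℕ, s' < h + 2 → s < h + 2 → u < s' + 1 →
        ¬(s' = h ∧ s = h ∧ u = h) →
        (if u + s = 2 * h then (((s'.choose u : ℕ) : ℂ) * (-1 : ℂ) ^ u * (t : ℂ) ^ (s' - u)) •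
          B s' (A s v) else 0) = 0 := by
      intro s' s u hs' hs hu hne
      split_ifs with hcond
      · rcases eq_or_ne s (h + 1) with hsh | hsh
        · rw [hsh, hA0 v, map_zero, smul_zero]
        · rcases eq_or_ne s' (h + 1) with hs'h | hs'h
          · rw [hs'h, hB0, smul_zero]
          · exfalso
            omega
      · rfl
    have hg2h : g (2 * h) = ((-1 : ℂ) ^ h) • B h (A h v) := by
      rw [hgr]
      rw [Finset.sum_eq_single_of_mem h (by rw [Finset.mem_range]; omega)]
      · rw [Finset.sum_eq_single_of_mem h (by rw [Finset.mem_range]; omega)]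
        · rw [Finset.sum_eq_single_of_mem h (by rw [Finset.mem_range]; omega)]
          · rw [if_pos (by omega)]
            rw [Nat.choose_self, Nat.sub_self, pow_zero]
            norm_num
          · intro u hu hune
            apply hterm0 h h u (by omega) (by omega) (Finset.mem_range.mp hu)
            omega
        · intro s hs hsne
          apply Finset.sum_eq_zero
          intro u hu
          apply hterm0 h s u (by omega) (Finset.mem_range.mp hs) (Finset.mem_range.mp hu)
          omega
      · intro s' hs' hs'ne
        apply Finset.sum_eq_zero
        intro s hs
        apply Finset.sum_eq_zero
        intro u hu
        apply hterm0 s' s u (Finset.mem_range.mp hs') (Finset.mem_range.mp hs)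
          (Finset.mem_range.mp hu)
        omega
    have hBAval : B h (A h v) =
        (((h.factorial : ℂ))⁻¹ * ((h.factorial : ℂ))⁻¹) • R.IV h (R.IV h v) := by
      rw [hBv, hAv]
      rw [if_pos (show δ₂ ≤ h from hdc t)]
      rw [if_pos (hdc 0)]
      rw [map_smul, smul_smul]
    have hmem2h := hgmem (2 * h) (by omega)
    rw [hg2h, hBAval, smul_smul] at hmem2h
    set c₀ : ℂ := (-1 : ℂ) ^ h * (((h.factorial : ℂ))⁻¹ * ((h.factorial : ℂ))⁻¹) with hc₀def
    have hc₀ : c₀ ≠ 0 := by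
      rw [hc₀def]
      apply mul_ne_zero
      · exact pow_ne_zero _ (by norm_num)
      · apply mul_ne_zero <;>
          exact inv_ne_zero (Nat.cast_ne_zero.mpr (Nat.factorial_ne_zero h))
    have h2 := (U k').smul_mem c₀⁻¹ hmem2h
    rwa [smul_smul, inv_mul_cancel₀ hc₀, one_smul] at h2
  -- the intersection submodule Y
  set Y : Submodule ℂ R.V := ⨅ (kk : ℤ), U kk with hYdef
  have hYmem : ∀ v : R.V, v ∈ Y ↔ ∀ kk : ℤ, v ∈ U kk := by
    intro v
    rw [hYdef]
    exact Submodule.mem_iInf _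
  -- Y is invariant under the LV operators
  have hY1 : ∀ (j : ℕ), ∀ v ∈ Y, R.LV j v ∈ Y := by
    intro j v hv
    rw [hYmem]
    intro k₀
    set g2 : ℕ → R.V := fun r =>
      (if r = 0 then (a + (k₀ : ℂ)) • v else 0) + (if r = 1 then (-1 : ℂ) • v else 0) +
        (if 1 ≤ r ∧ r ≤ q + 1 then ((r.factorial : ℂ))⁻¹ • R.LV (r - 1) v else 0) with hg2
    have hg2r : ∀ r : ℕ, g2 r =
      (if r = 0 then (a + (k₀ : ℂ)) • v else 0) + (if r = 1 then (-1 : ℂ) • v else 0) +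
        (if 1 ≤ r ∧ r ≤ q + 1 then ((r.factorial : ℂ))⁻¹ • R.LV (r - 1) v else 0) := fun r => rfl
    have hid : ∀ c : ℂ,
        (a + ((k₀ : ℂ) - c)) • v + ∑ j ∈ range (q + 1),
          (c ^ (j + 1) * (((j + 1).factorial : ℂ))⁻¹) • R.LV j v
        = ∑ r ∈ range (q + 3), c ^ r • g2 r := by
      intro c
      have e1 : (∑ r ∈ range (q + 3), c ^ r • g2 r)
          = (∑ r ∈ range (q + 3), c ^ r • (if r = 0 then (a + (k₀ : ℂ)) • v else 0))
            + (∑ r ∈ range (q + 3), c ^ r • (if r = 1 then (-1 : ℂ) • v else 0))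
            + (∑ r ∈ range (q + 3), c ^ r •
                (if 1 ≤ r ∧ r ≤ q + 1 then ((r.factorial : ℂ))⁻¹ • R.LV (r - 1) v else 0)) := by
        rw [← Finset.sum_add_distrib, ← Finset.sum_add_distrib]
        apply Finset.sum_congr rfl
        intro r _
        rw [hg2r, smul_add, smul_add]
      have e2 : (∑ r ∈ range (q + 3), c ^ r • (if r = 0 then (a + (k₀ : ℂ)) • v else 0))
          = (a + (k₀ : ℂ)) • v := by
        have h1 : ∀ r ∈ range (q + 3), c ^ r • (if r = 0 then (a + (k₀ : ℂ)) • v else 0)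
            = (if r = 0 then c ^ r • (a + (k₀ : ℂ)) • v else 0) := by
          intro r _
          split_ifs <;> simp
        rw [Finset.sum_congr rfl h1]
        rw [Finset.sum_ite_eq' (range (q + 3)) 0 (fun r => c ^ r • (a + (k₀ : ℂ)) • v)]
        rw [if_pos (by rw [Finset.mem_range]; omega), pow_zero, one_smul]
      have e3 : (∑ r ∈ range (q + 3), c ^ r • (if r = 1 then (-1 : ℂ) • v else 0))
          = (-c) • v := by
        have h1 : ∀ r ∈ range (q + 3), c ^ r • (if r = 1 then (-1 : ℂ) • v else 0)
            = (if r = 1 then c ^ r • (-1 : ℂ) • v else 0) := by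
          intro r _
          split_ifs <;> simp
        rw [Finset.sum_congr rfl h1]
        rw [Finset.sum_ite_eq' (range (q + 3)) 1 (fun r => c ^ r • (-1 : ℂ) • v)]
        rw [if_pos (by rw [Finset.mem_range]; omega), pow_one, smul_smul]
        congr 1
        ring
      have e4 : (∑ r ∈ range (q + 3), c ^ r •
            (if 1 ≤ r ∧ r ≤ q + 1 then ((r.factorial : ℂ))⁻¹ • R.LV (r - 1) v else 0))
          = ∑ j ∈ range (q + 1), (c ^ (j + 1) * (((j + 1).factorial : ℂ))⁻¹) • R.LV j v := by
        have e5 : ∀ r ∈ range (q + 3), c ^ r •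
            (if 1 ≤ r ∧ r ≤ q + 1 then ((r.factorial : ℂ))⁻¹ • R.LV (r - 1) v else 0)
            = (if 1 ≤ r ∧ r ≤ q + 1 then (c ^ r * ((r.factorial : ℂ))⁻¹) • R.LV (r - 1) v else 0) := by
          intro r _
          split_ifs
          · rw [smul_smul]
          · rw [smul_zero]
        rw [Finset.sum_congr rfl e5]
        rw [show q + 3 = (q + 2) + 1 from rfl, Finset.sum_range_succ]
        rw [if_neg (by omega), add_zero]
        rw [Finset.sum_range_succ']
        rw [if_neg (by omega), add_zero]
        apply Finset.sum_congr rfl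
        intro j hj
        rw [Finset.mem_range] at hj
        rw [if_pos (by omega), Nat.add_sub_cancel]
      rw [e1, e2, e3, e4, ← add_smul]
      have h1 : (a + ((k₀ : ℂ) - c)) = ((a + (k₀ : ℂ)) + (-c)) := by ring
      rw [h1]
    have hS2 : ∀ m : ℤ, (∑ r ∈ range (q + 3), (((id m : ℤ) : ℂ)) ^ r • g2 r) ∈ U k₀ := by
      intro m
      have h1 := hUL (k₀ - m) m v ((hYmem v).mp hv (k₀ - m))
      have hidx : m + (k₀ - m) = k₀ := by ring
      rw [hidx] at h1
      have hc1 : (((k₀ - m : ℤ)) : ℂ) = (k₀ : ℂ) - ((m : ℤ) : ℂ) := by push_cast; ring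
      rw [hc1, hid ((m : ℤ) : ℂ)] at h1
      exact h1
    have hext := poly_extract (U k₀) (q + 3) g2 id (fun x y hh => hh) hS2
    rcases Nat.lt_or_ge j (q + 1) with hj | hj
    · rcases Nat.eq_zero_or_pos j with hj0 | hj0
      · have h1 := hext 1 (by omega)
        rw [hg2r] at h1
        simp only [if_neg (by omega : ¬ (1 : ℕ) = 0), if_pos rfl,
          if_pos (show 1 ≤ 1 ∧ 1 ≤ q + 1 by omega), zero_add] at h1
        have h2 : ((1 : ℕ).factorial : ℂ)⁻¹ • R.LV (1 - 1) v
            = ((-1 : ℂ) • v + ((1 : ℕ).factorial : ℂ)⁻¹ • R.LV (1 - 1) v) + v := by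
          rw [neg_smul, one_smul]
          abel
        have h3 : R.LV j v = ((-1 : ℂ) • v + ((1 : ℕ).factorial : ℂ)⁻¹ • R.LV (1 - 1) v) + v := by
          rw [← h2, hj0]
          norm_num
        rw [h3]
        exact (U k₀).add_mem h1 ((hYmem v).mp hv k₀)
      · have h1 := hext (j + 1) (by omega)
        rw [hg2r] at h1
        rw [if_neg (by omega), if_neg (by omega), if_pos (by omega), zero_add, zero_add] at h1
        have h2 := (U k₀).smul_mem (((j + 1).factorial : ℂ)) h1
        rw [smul_smul, mul_inv_cancel₀
          (Nat.cast_ne_zero.mpr (Nat.factorial_ne_zero (j + 1))), one_smul] at h2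
        have h3 : (j + 1) - 1 = j := by omega
        rwa [h3] at h2
    · rw [hLVtop j (by omega) v]
      exact (U k₀).zero_mem
  -- Y is invariant under the IV operators
  have hY2 : ∀ (s : ℕ), dmin p d ≤ s → ∀ v ∈ Y, R.IV s v ∈ Y := by
    have hne : (Finset.range p).Nonempty := ⟨0, by rw [Finset.mem_range]; omega⟩
    have hdm : dmin p d = (Finset.range p).inf' hne d := by
      rw [dmin, finsetMin, dif_pos hne]
    obtain ⟨i₀, hi₀mem, hi₀val⟩ := Finset.exists_mem_eq_inf' hne d
    have hi₀p : i₀ < p := Finset.mem_range.mp hi₀mem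
    have hi₀d : d i₀ = dmin p d := by rw [hdm, hi₀val]
    intro s hs v hv
    rw [hYmem]
    intro k₀
    rcases Nat.lt_or_ge h s with hsh | hsh
    · rw [hIVtop s (by omega) v]
      exact (U k₀).zero_mem
    · set g3 : ℕ → R.V := fun r =>
        ((r.factorial : ℂ))⁻¹ • (if d i₀ ≤ r then R.IV r v else 0) with hg3
      have hg3r : ∀ r : ℕ, g3 r =
        ((r.factorial : ℂ))⁻¹ • (if d i₀ ≤ r then R.IV r v else 0) := fun r => rfl
      have hS3 : ∀ m : ℤ,
          (∑ r ∈ range (h + 2), ((((p : ℤ) * m + (i₀ : ℤ) : ℤ)) : ℂ) ^ r • g3 r) ∈ U k₀ := by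
        intro m
        set b : ℤ := (p : ℤ) * m + (i₀ : ℤ) with hb
        have h1 := hUI (k₀ - b) b v ((hYmem v).mp hv (k₀ - b))
        have hidx : b + (k₀ - b) = k₀ := by ring
        rw [hidx] at h1
        have hclb : d ((b % (p : ℤ)).toNat) = d i₀ := by rw [hb, hcls i₀ hi₀p m]
        rw [hclb] at h1
        have e1 : ∀ r ∈ range (h + 2), ((b : ℂ) ^ r * ((r.factorial : ℂ))⁻¹) •
            (if d i₀ ≤ r then R.IV r v else 0) = (b : ℂ) ^ r • g3 r := by
          intro r _
          rw [hg3r, mul_smul]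
        rw [Finset.sum_congr rfl e1] at h1
        exact h1
      have hφinj : Function.Injective (fun m : ℤ => (p : ℤ) * m + (i₀ : ℤ)) := by
        intro x y hh
        simp only [add_left_inj] at hh
        exact mul_left_cancel₀ hpz hh
      have hext := poly_extract (U k₀) (h + 2) g3 (fun m : ℤ => (p : ℤ) * m + (i₀ : ℤ)) hφinj hS3
      have h1 := hext s (by omega)
      rw [hg3r, if_pos (by omega : d i₀ ≤ s)] at h1
      have h2 := (U k₀).smul_mem ((s.factorial : ℂ)) h1
      rwa [smul_smul, mul_inv_cancel₀
        (Nat.cast_ne_zero.mpr (Nat.factorial_ne_zero s)), one_smul] at h2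
  -- conclude by simplicity
  rcases hRsim.2 Y hY1 hY2 with hYbot | hYtop
  · exfalso
    obtain ⟨w, hwW, hwne⟩ := Submodule.exists_mem_ne_zero_of_ne_bot hW0
    obtain ⟨k₁, hk₁⟩ : ∃ k₁ : ℤ, w k₁ ≠ 0 := by
      by_contra hc
      push_neg at hc
      exact hwne (Finsupp.ext hc)
    have h1 : w k₁ ∈ U k₁ := (hUmem _ _).mpr (hcomp w hwW k₁)
    have h2 : R.IV h (R.IV h (w k₁)) ∈ Y :=
      (hYmem _).mpr (fun kk => hstep8 k₁ kk (w k₁) h1)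
    have h3 : R.IV h (R.IV h (w k₁)) ≠ 0 := fun hh => hk₁ (hinj _ (hinj _ hh))
    rw [hYbot] at h2
    exact h3 (by simpa using h2)
  · rw [Submodule.eq_top_iff']
    intro w
    have hsing : ∀ kk : ℤ, single kk (w kk) ∈ W := by
      intro kk
      have h1 : w kk ∈ Y := hYtop ▸ Submodule.mem_top
      exact (hUmem _ _).mp ((hYmem _).mp h1 kk)
    have h2 := Submodule.finsuppSum_mem (S := W) (f := w) (g := Finsupp.single) (h := fun c _ => hsing c)
    rwa [Finsupp.sum_single] at h2

end MainSimple
set_option maxHeartbeats 1600000 in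
/-- the twisted action (by `f ∈ ℂ[x^{±1}]`) defines a new `𝔗`-module
structure `M^f(V, a, d)` on `V ⊗ ℂ[x^{±1}]`, and this module is irreducible. -/
theorem twisted_thv_module_irreducible (p : ℕ) (hp : 1 < p) (T : TwistedHV) (a : ℂ)
    (d : ℕ → ℕ) (hd : ∀ i, d i ≤ 1)
    (R : THVRep (dmin p d)) (hRsim : R.IsSimple) (h q : ℕ) (hlev : R.AnnLevel h q)
    (ρ : T.T →ₗ⁅ℂ⁆ Module.End ℂ (ℤ →₀ R.V)) (hρ : IsTHVAction T p d a R ρ)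
    (f : ℤ →₀ ℂ) :
    ∃ ρf : T.T →ₗ⁅ℂ⁆ Module.End ℂ (ℤ →₀ R.V),
      (∀ (m : ℤ) (w : ℤ →₀ R.V),
        ρf (T.L m) w = ρ (T.L m) w + ∑ i ∈ f.support, f i • ρ (T.I (m + i)) w) ∧
      (∀ m : ℤ, ρf (T.I m) = ρ (T.I m)) ∧
      ρf T.CL = 0 ∧ ρf T.CLI = 0 ∧ ρf T.CI = 0 ∧
      IsIrreducibleRep ρf := by
  classical
  obtain ⟨hρL, hρI, hρCL, hρCLI, hρCI⟩ := hρ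
  have hppos : 0 < p := by omega
  have hpz : ((p : ℤ)) ≠ 0 := by exact_mod_cast hppos.ne'
  have hlevI := hlev.2.2.2.1
  have hlevL := hlev.2.2.2.2
  obtain ⟨vh, hvh⟩ := hlev.2.1
  have hcls : ∀ (i : ℕ), i < p → ∀ m : ℤ, ((((p : ℤ) * m + (i : ℤ)) % (p : ℤ)).toNat) = i := by
    intro i hi m
    have h1 : ((p : ℤ) * m + (i : ℤ)) % (p : ℤ) = (i : ℤ) % (p : ℤ) := by
      rw [add_comm, mul_comm]
      exact Int.add_mul_emod_self_right _ _ _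
    have h2 : (i : ℤ) % (p : ℤ) = (i : ℤ) := by
      apply Int.emod_eq_of_lt (by positivity)
      exact_mod_cast hi
    rw [h1, h2, Int.toNat_natCast]
  -- converted action formulas
  have hL : ∀ (m k : ℤ) (v : R.V), ρ (T.L m) (Finsupp.single k v) =
      Finsupp.single (m + k) ((a + (k : ℂ)) • v + ∑ j ∈ Finset.range (q + 1),
        (((m : ℂ) ^ (j + 1)) * (((j + 1).factorial : ℂ))⁻¹) • R.LV j v) := by
    intro m k v
    rw [hρL m k v]
    have hsupp : (Function.support fun j : ℕ =>
        (((m : ℂ) ^ (j + 1)) / ((j + 1).factorial : ℂ)) • Finsupp.single (m + k) (R.LV j v))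
        ⊆ ↑(Finset.range (q + 1)) := by
      intro j hj
      simp only [Function.mem_support] at hj
      rw [Finset.coe_range, Set.mem_Iio]
      by_contra hjq
      push_neg at hjq
      rw [hlevL j (by omega) v] at hj
      simp at hj
    rw [finsum_eq_sum_of_support_subset _ hsupp]
    rw [Finsupp.single_add, Finsupp.single_finset_sum]
    congr 1
    · rw [Finsupp.smul_single]
    · apply Finset.sum_congr rfl
      intro j _
      rw [Finsupp.smul_single, div_eq_mul_inv]
  have hI : ∀ (b k : ℤ) (v : R.V), ρ (T.I b) (Finsupp.single k v) =
      Finsupp.single (b + k) (∑ s ∈ Finset.range (h + 2),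
        (((b : ℂ) ^ s) * ((s.factorial : ℂ))⁻¹) •
          (if d ((b % (p : ℤ)).toNat) ≤ s then R.IV s v else 0)) := by
    intro b k v
    rw [hρI b k v]
    set δ : ℕ := d ((b % (p : ℤ)).toNat) with hδ
    have hδ01 : δ = 0 ∨ δ = 1 := by have := hd ((b % (p : ℤ)).toNat); omega
    have hsupp : (Function.support fun j : ℕ =>
        (((b : ℂ) ^ (j + δ)) / ((j + δ).factorial : ℂ)) •
          Finsupp.single (b + k) (R.IV (j + δ) v)) ⊆ ↑(Finset.range (h + 1)) := by
      intro j hj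
      simp only [Function.mem_support] at hj
      rw [Finset.coe_range, Set.mem_Iio]
      by_contra hjq
      push_neg at hjq
      rw [hlevI (j + δ) (by omega) v] at hj
      simp at hj
    rw [finsum_eq_sum_of_support_subset _ hsupp]
    rw [Finsupp.single_finset_sum]
    rcases hδ01 with hδ0 | hδ1
    · rw [hδ0]
      conv_rhs => rw [show h + 2 = (h + 1) + 1 from rfl, Finset.sum_range_succ]
      have hlast : (Finsupp.single (b + k) (((b : ℂ) ^ (h + 1) * (((h + 1).factorial : ℂ))⁻¹) •
          (if (0 : ℕ) ≤ h + 1 then R.IV (h + 1) v else 0)) : ℤ →₀ R.V) = 0 := by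
        rw [if_pos (by omega), hlevI (h + 1) (by omega) v, smul_zero, Finsupp.single_zero]
      rw [hlast, add_zero]
      apply Finset.sum_congr rfl
      intro j _
      rw [if_pos (by omega), Finsupp.smul_single, Nat.add_zero, div_eq_mul_inv]
    · rw [hδ1]
      conv_rhs => rw [show h + 2 = (h + 1) + 1 from rfl, Finset.sum_range_succ']
      have hlast : (Finsupp.single (b + k) (((b : ℂ) ^ (0 : ℕ) * (((0 : ℕ).factorial : ℂ))⁻¹) •
          (if (1 : ℕ) ≤ 0 then R.IV 0 v else 0)) : ℤ →₀ R.V) = 0 := by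
        rw [if_neg (by omega), smul_zero, Finsupp.single_zero]
      rw [hlast, add_zero]
      apply Finset.sum_congr rfl
      intro j _
      rw [if_pos (by omega), Finsupp.smul_single, div_eq_mul_inv]
  -- the key level inequality for the residues
  have hdh : ∀ i : ℕ, i < p → d i ≤ h := by
    rcases Nat.eq_zero_or_pos h with hh0 | hh1
    · intro i hip
      by_contra hdi
      push_neg at hdi
      have hdi1 : d i = 1 := by have := hd i; omega
      set b₀ : ℤ := (p : ℤ) * 1 + (i : ℤ) with hb₀
      have hclb₀ : ((b₀ % (p : ℤ)).toNat) = i := hcls i hip 1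
      have hIb0 : ∀ c : ℤ, ((c % (p : ℤ)).toNat) = i → ρ (T.I c) = 0 := by
        intro c hc
        apply Finsupp.lhom_ext
        intro k v
        rw [hI c k v, hc, hdi1]
        have hz : ∀ s : ℕ, (if 1 ≤ s then R.IV s v else 0) = 0 := by
          intro s
          split_ifs
          · exact hlevI s (by omega) v
          · rfl
        simp [hz]
      have hIall : ∀ c : ℤ, ρ (T.I c) = 0 := by
        intro c
        have h1 := LieHom.map_lie ρ (T.L (c - b₀)) (T.I b₀)
        rw [hIb0 b₀ hclb₀, lie_zero, T.bracket_LI, map_add ρ, map_smul ρ] at h1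
        have h2 : ρ (if (c - b₀) + b₀ = 0 then
            (((c - b₀ : ℤ) : ℂ) ^ 2 + ((c - b₀ : ℤ) : ℂ)) • T.CLI else 0) = 0 := by
          split_ifs
          · rw [map_smul ρ, hρCLI, smul_zero]
          · simp only [ρ.map_zero, map_zero]
        rw [h2, add_zero] at h1
        have hb₀ne : ((b₀ : ℤ) : ℂ) ≠ 0 := by
          rw [Int.cast_ne_zero, hb₀]
          omega
        have e : (c - b₀) + b₀ = c := by ring
        rw [e] at h1
        exact (smul_eq_zero.mp h1).resolve_left hb₀ne
      -- contradiction with the annihilating level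
      have hne : (Finset.range p).Nonempty := ⟨0, by rw [Finset.mem_range]; omega⟩
      obtain ⟨i₀, hi₀mem, hi₀val⟩ := Finset.exists_mem_eq_inf' hne d
      have hi₀p : i₀ < p := Finset.mem_range.mp hi₀mem
      have hdm : dmin p d = (Finset.range p).inf' hne d := by
        rw [dmin, finsetMin, dif_pos hne]
      have hdi₀0 : d i₀ = 0 := by
        have h3 : dmin p d ≤ h := hlev.1
        rw [hdm, hi₀val] at h3
        omega
      have hcli₀ : (((i₀ : ℤ) % (p : ℤ)).toNat) = i₀ := by
        have := hcls i₀ hi₀p 0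
        rwa [mul_zero, zero_add] at this
      have h5 := hI (i₀ : ℤ) 0 vh
      rw [hIall (i₀ : ℤ)] at h5
      have h6 : (∑ s ∈ Finset.range (h + 2), (((i₀ : ℤ) : ℂ) ^ s * ((s.factorial : ℂ))⁻¹) •
          (if d (((i₀ : ℤ) % (p : ℤ)).toNat) ≤ s then R.IV s vh else 0)) = 0 := by
        have h7 := h5.symm
        rwa [LinearMap.zero_apply, Finsupp.single_eq_zero] at h7
      rw [hcli₀, hdi₀0] at h6
      rw [hh0] at h6
      rw [show (0 : ℕ) + 2 = 1 + 1 from rfl, Finset.sum_range_succ, Finset.sum_range_one] at h6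
      rw [if_pos (by omega), if_pos (by omega)] at h6
      rw [hlevI 1 (by omega) vh, smul_zero, add_zero] at h6
      simp only [pow_zero, Nat.factorial_zero, Nat.cast_one, inv_one, mul_one, one_smul] at h6
      rw [hh0] at hvh
      exact hvh h6
    · intro i _
      exact le_trans (hd i) hh1
  -- bracket identities for ρ
  have hρLL : ∀ m n : ℤ, ⁅ρ (T.L m), ρ (T.L n)⁆ = ((n : ℂ) - (m : ℂ)) • ρ (T.L (m + n)) := by
    intro m n
    rw [← LieHom.map_lie, T.bracket_LL, map_add ρ, map_smul ρ]
    have hz : ρ (if m + n = 0 then (((m : ℂ) ^ 3 - (m : ℂ)) / 12) • T.CL else 0) = 0 := by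
      split_ifs
      · rw [map_smul ρ, hρCL, smul_zero]
      · simp only [ρ.map_zero, map_zero]
    rw [hz, add_zero]
  have hρLI : ∀ m n : ℤ, ⁅ρ (T.L m), ρ (T.I n)⁆ = (n : ℂ) • ρ (T.I (m + n)) := by
    intro m n
    rw [← LieHom.map_lie, T.bracket_LI, map_add ρ, map_smul ρ]
    have hz : ρ (if m + n = 0 then (((m : ℂ) ^ 2 + (m : ℂ))) • T.CLI else 0) = 0 := by
      split_ifs
      · rw [map_smul ρ, hρCLI, smul_zero]
      · simp only [ρ.map_zero, map_zero]
    rw [hz, add_zero]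
  have hρII : ∀ m n : ℤ, ⁅ρ (T.I m), ρ (T.I n)⁆ = 0 := by
    intro m n
    rw [← LieHom.map_lie, T.bracket_II]
    split_ifs
    · rw [map_smul ρ, hρCI, smul_zero]
    · simp only [ρ.map_zero, map_zero]
  -- construction of the twisted representation
  set E := Module.End ℂ (ℤ →₀ R.V)
  set Fv : (ℤ ⊕ ℤ ⊕ Fin 3) → E :=
    Sum.elim (fun m : ℤ => ρ (T.L m) + ∑ i ∈ f.support, f i • ρ (T.I (m + i)))
      (Sum.elim (fun b : ℤ => ρ (T.I b)) (fun _ : Fin 3 => 0)) with hFv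
  set Fmap : T.T →ₗ[ℂ] E := T.basis.constr ℂ Fv with hFdef
  have hbL : ∀ m : ℤ, T.L m = T.basis (Sum.inl m) := fun m => by rw [T.basis_eq]; rfl
  have hbI : ∀ b : ℤ, T.I b = T.basis (Sum.inr (Sum.inl b)) := fun b => by rw [T.basis_eq]; rfl
  have hbCL : T.CL = T.basis (Sum.inr (Sum.inr 0)) := by rw [T.basis_eq]; rfl
  have hbCLI : T.CLI = T.basis (Sum.inr (Sum.inr 1)) := by rw [T.basis_eq]; rfl
  have hbCI : T.CI = T.basis (Sum.inr (Sum.inr 2)) := by rw [T.basis_eq]; rfl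
  have hFL : ∀ m : ℤ, Fmap (T.L m)
      = ρ (T.L m) + ∑ i ∈ f.support, f i • ρ (T.I (m + i)) := by
    intro m
    conv_lhs => rw [hbL m, hFdef]
    rw [Module.Basis.constr_basis, hFv]
    rfl
  have hFI : ∀ b : ℤ, Fmap (T.I b) = ρ (T.I b) := by
    intro b
    conv_lhs => rw [hbI b, hFdef]
    rw [Module.Basis.constr_basis, hFv]
    rfl
  have hFCL : Fmap T.CL = 0 := by rw [hbCL, hFdef, Module.Basis.constr_basis, hFv]; rfl
  have hFCLI : Fmap T.CLI = 0 := by rw [hbCLI, hFdef, Module.Basis.constr_basis, hFv]; rfl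
  have hFCI : Fmap T.CI = 0 := by rw [hbCI, hFdef, Module.Basis.constr_basis, hFv]; rfl
  -- sum-bracket helpers in End
  have lie_sum' : ∀ (x : E) (s : Finset ℤ) (g : ℤ → E),
      ⁅x, ∑ i ∈ s, g i⁆ = ∑ i ∈ s, ⁅x, g i⁆ := by
    intro x s g
    simp only [Ring.lie_def]
    rw [Finset.mul_sum, Finset.sum_mul, ← Finset.sum_sub_distrib]
  have sum_lie' : ∀ (s : Finset ℤ) (g : ℤ → E) (x : E),
      ⁅∑ i ∈ s, g i, x⁆ = ∑ i ∈ s, ⁅g i, x⁆ := by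
    intro s g x
    simp only [Ring.lie_def]
    rw [Finset.mul_sum, Finset.sum_mul, ← Finset.sum_sub_distrib]
  have smul_lie' : ∀ (c : ℂ) (x y : E), ⁅c • x, y⁆ = c • ⁅x, y⁆ := by
    intro c x y
    simp only [Ring.lie_def, smul_sub, smul_mul_assoc, mul_smul_comm]
  have lie_smul' : ∀ (c : ℂ) (x y : E), ⁅x, c • y⁆ = c • ⁅x, y⁆ := by
    intro c x y
    simp only [Ring.lie_def, smul_sub, smul_mul_assoc, mul_smul_comm]
  -- the main bracket computation on basis pairs
  have hcaseLI : ∀ m b : ℤ, Fmap ⁅T.L m, T.I b⁆ = ⁅Fmap (T.L m), Fmap (T.I b)⁆ := by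
    intro m b
    rw [T.bracket_LI, map_add, map_smul, hFI]
    have hz : Fmap (if m + b = 0 then (((m : ℂ) ^ 2 + (m : ℂ))) • T.CLI else 0) = 0 := by
      split_ifs
      · rw [map_smul, hFCLI, smul_zero]
      · simp only [ρ.map_zero, map_zero]
    rw [hz, add_zero, hFL, hFI, add_lie, sum_lie']
    have hz2 : (∑ i ∈ f.support, ⁅f i • ρ (T.I (m + i)), ρ (T.I b)⁆) = 0 := by
      apply Finset.sum_eq_zero
      intro i _
      rw [smul_lie', hρII, smul_zero]
    rw [hz2, add_zero, hρLI]
  have hcaseLL : ∀ m n : ℤ, Fmap ⁅T.L m, T.L n⁆ = ⁅Fmap (T.L m), Fmap (T.L n)⁆ := by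
    intro m n
    rw [T.bracket_LL, map_add, map_smul, hFL]
    have hz : Fmap (if m + n = 0 then (((m : ℂ) ^ 3 - (m : ℂ)) / 12) • T.CL else 0) = 0 := by
      split_ifs
      · rw [map_smul, hFCL, smul_zero]
      · simp only [ρ.map_zero, map_zero]
    rw [hz, add_zero, hFL, hFL]
    rw [lie_add, add_lie, add_lie, lie_sum', sum_lie', sum_lie']
    have hz2 : (∑ i ∈ f.support, ⁅f i • ρ (T.I (m + i)), ∑ j ∈ f.support, f j • ρ (T.I (n + j))⁆) = 0 := by
      apply Finset.sum_eq_zero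
      intro i _
      rw [smul_lie', lie_sum']
      have : (∑ j ∈ f.support, ⁅ρ (T.I (m + i)), f j • ρ (T.I (n + j))⁆) = 0 := by
        apply Finset.sum_eq_zero
        intro j _
        rw [lie_smul', hρII, smul_zero]
      rw [this, smul_zero]
    rw [hz2, add_zero, hρLL]
    have e1 : ∀ i : ℤ, ⁅ρ (T.L m), f i • ρ (T.I (n + i))⁆
        = (f i * ((n : ℂ) + (i : ℂ))) • ρ (T.I (m + n + i)) := by
      intro i
      rw [lie_smul', hρLI, smul_smul]
      have : m + (n + i) = m + n + i := by ring
      rw [this]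
      congr 1
      push_cast
      ring
    have e2 : ∀ i : ℤ, ⁅f i • ρ (T.I (m + i)), ρ (T.L n)⁆
        = (-(f i * ((m : ℂ) + (i : ℂ)))) • ρ (T.I (m + n + i)) := by
      intro i
      rw [smul_lie', ← lie_skew, hρLI, smul_neg]
      have hidx : n + (m + i) = m + n + i := by ring
      rw [hidx, smul_smul, ← neg_smul]
      congr 1
      push_cast
      ring
    rw [Finset.sum_congr rfl (fun i _ => e1 i), Finset.sum_congr rfl (fun i _ => e2 i)]
    rw [smul_add, Finset.smul_sum, add_assoc, ← Finset.sum_add_distrib]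
    congr 1
    apply Finset.sum_congr rfl
    intro i _
    rw [smul_smul, ← add_smul]
    congr 1
    ring
  have main : ∀ i j, Fmap ⁅T.basis i, T.basis j⁆ = ⁅Fmap (T.basis i), Fmap (T.basis j)⁆ := by
    have hcent : ∀ (x : T.T), Fmap x = 0 → (∀ y : T.T, ⁅x, y⁆ = 0) →
        ∀ y : T.T, (Fmap ⁅x, y⁆ = ⁅Fmap x, Fmap y⁆ ∧ Fmap ⁅y, x⁆ = ⁅Fmap y, Fmap x⁆) := by
      intro x hx hxc y
      constructor
      · rw [hxc y, map_zero, hx, zero_lie]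
      · have : ⁅y, x⁆ = 0 := by rw [← lie_skew, hxc y, neg_zero]
        rw [this, map_zero, hx, lie_zero]
    have hcent3 : ∀ c : Fin 3, Fmap (T.basis (Sum.inr (Sum.inr c))) = 0 ∧
        (∀ y : T.T, ⁅T.basis (Sum.inr (Sum.inr c)), y⁆ = 0) := by
      intro c
      have hb3 : T.basis (Sum.inr (Sum.inr c)) = ![T.CL, T.CLI, T.CI] c := by
        rw [T.basis_eq]; rfl
      fin_cases c
      · exact ⟨by rw [hb3]; exact hFCL, by rw [hb3]; exact T.central_CL⟩
      · exact ⟨by rw [hb3]; exact hFCLI, by rw [hb3]; exact T.central_CLI⟩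
      · exact ⟨by rw [hb3]; exact hFCI, by rw [hb3]; exact T.central_CI⟩
    intro i j
    rcases i with m | i2
    · rcases j with n | j2
      · rw [← hbL, ← hbL]
        exact hcaseLL m n
      · rcases j2 with b | c
        · rw [← hbL, ← hbI]
          exact hcaseLI m b
        · exact ((hcent _ (hcent3 c).1 (hcent3 c).2 _).2)
    · rcases i2 with b | c
      · rcases j with n | j2
        · rw [← hbI, ← hbL]
          have h1 := hcaseLI n b
          rw [← lie_skew, map_neg, h1, ← lie_skew (Fmap (T.L n)), neg_neg]
        · rcases j2 with b' | c
          · rw [← hbI, ← hbI, T.bracket_II]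
            have hz : Fmap (if b + b' = 0 then (b : ℂ) • T.CI else 0) = 0 := by
              split_ifs
              · rw [map_smul, hFCI, smul_zero]
              · simp only [ρ.map_zero, map_zero]
            rw [hz, hFI, hFI, hρII]
          · exact ((hcent _ (hcent3 c).1 (hcent3 c).2 _).2)
      · exact ((hcent _ (hcent3 c).1 (hcent3 c).2 _).1)
  -- bilinear extension
  have key : ∀ x y : T.T, Fmap ⁅x, y⁆ = ⁅Fmap x, Fmap y⁆ := by
    let B1 : T.T →ₗ[ℂ] T.T →ₗ[ℂ] E := LinearMap.mk₂ ℂ (fun x y => Fmap ⁅x, y⁆)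
      (fun x x' y => by simp only [add_lie, map_add])
      (fun cc x y => by simp only [smul_lie, map_smul])
      (fun x y y' => by simp only [lie_add, map_add])
      (fun cc x y => by simp only [lie_smul, map_smul])
    let B2 : T.T →ₗ[ℂ] T.T →ₗ[ℂ] E := LinearMap.mk₂ ℂ (fun x y => ⁅Fmap x, Fmap y⁆)
      (fun x x' y => by simp only [map_add, add_lie])
      (fun cc x y => by simp only [map_smul]; exact smul_lie' cc (Fmap x) (Fmap y))
      (fun x y y' => by simp only [map_add, lie_add])
      (fun cc x y => by simp only [map_smul]; exact lie_smul' cc (Fmap x) (Fmap y))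
    have hB : B1 = B2 := by
      apply T.basis.ext
      intro i
      apply T.basis.ext
      intro j
      exact main i j
    intro x y
    have := LinearMap.congr_fun (LinearMap.congr_fun hB x) y
    exact this
  set ρf : T.T →ₗ⁅ℂ⁆ E := { Fmap with map_lie' := fun {x y} => key x y } with hρf
  have hρfL : ∀ m : ℤ, ρf (T.L m) = ρ (T.L m) + ∑ i ∈ f.support, f i • ρ (T.I (m + i)) := hFL
  have hρfI : ∀ b : ℤ, ρf (T.I b) = ρ (T.I b) := hFI
  refine ⟨ρf, ?_, hρfI, hFCL, hFCLI, hFCI, ?_, ?_⟩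
  · intro m w
    rw [hρfL m]
    simp [LinearMap.add_apply, LinearMap.sum_apply, LinearMap.smul_apply]
  · -- nonzero vector
    refine ⟨Finsupp.single 0 vh, ?_⟩
    intro hzero
    have : vh = 0 := by
      rwa [Finsupp.single_eq_zero] at hzero
    exact hvh (by rw [this, map_zero])
  · -- irreducibility
    intro W hW
    by_cases hbot : W = ⊥
    · exact Or.inl hbot
    · refine Or.inr ?_
      have hWI : ∀ b : ℤ, ∀ w ∈ W, ρ (T.I b) w ∈ W := by
        intro b w hw
        have := hW (T.I b) w hw
        rwa [hρfI b] at this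
      have hWL : ∀ m : ℤ, ∀ w ∈ W, ρ (T.L m) w ∈ W := by
        intro m w hw
        have h1 := hW (T.L m) w hw
        rw [hρfL m] at h1
        have h2 : (∑ i ∈ f.support, f i • ρ (T.I (m + i))) w ∈ W := by
          rw [LinearMap.sum_apply]
          apply Submodule.sum_mem
          intro i _
          rw [LinearMap.smul_apply]
          exact W.smul_mem _ (hWI (m + i) w hw)
        have h3 : ρ (T.L m) w = (ρ (T.L m) + ∑ i ∈ f.support, f i • ρ (T.I (m + i))) w
            - (∑ i ∈ f.support, f i • ρ (T.I (m + i))) w := by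
          rw [LinearMap.add_apply]
          abel
        rw [h3]
        exact W.sub_mem h1 h2
      exact main_simple p hp d a h q R hRsim hlev hdh
        (fun m => ρ (T.L m)) (fun b => ρ (T.I b)) hL hI W hWL hWI hbot
end
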